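/- arXiv:1711.04296 — 6 statements merged into one kernel-verified Lean document; each statement's English description precedes it below -/
import Mathlib

section
/- Let K be a field, ν a valuation on the polynomial ring K[x] with trivial support, K̄ an algebraic closure of K, and μ an extension of ν to K̄[x]. Then for every monic polynomial f ∈ K[x], one has δ(f) = ε(f), i.e., max{μ(x−a) : a a root of f in K̄} = max over integers r ≥ 1 of (ν(f) − ν(∂_r f))/r. -/
open Polynomial

section KeyPolyDefs

variable {K : Type*} [Field K] {Γ : Type*} [AddCommGroup Γ] [LinearOrder Γ] [IsOrderedAddMonoid Γ]

/-- The value `ν f` read in `Γ` (junk value `0` when `ν f = ⊤`). -/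
noncomputable def aval (ν : AddValuation (Polynomial K) (WithTop Γ)) (f : Polynomial K) : Γ :=
  WithTop.untopD 0 (ν f)

/-- `ν` has trivial support: only `0` has value `⊤`. -/
def TrivialSupport (ν : AddValuation (Polynomial K) (WithTop Γ)) : Prop :=
  ∀ f : Polynomial K, ν f = ⊤ → f = 0

/-- The set of indices `r`, `1 ≤ r ≤ deg f` with `∂_r f ≠ 0`, over which `ε(f)` is computed. -/
noncomputable def epsSupport (f : Polynomial K) : Finset ℕ :=
  @Finset.filter _ (fun r => f.hasseDeriv r ≠ 0) (Classical.decPred _) (Finset.Icc 1 f.natDegree)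

/-- `ε(f) = max_{r ≥ 1} (ν f - ν ∂_r f) / r`, computed in the divisible group `Γ`. -/
noncomputable def eps [Module ℚ Γ] (ν : AddValuation (Polynomial K) (WithTop Γ))
    (f : Polynomial K) : Γ :=
  if h : (epsSupport f).Nonempty then
    (epsSupport f).sup' h fun r => ((r : ℚ)⁻¹) • (aval ν f - aval ν (f.hasseDeriv r))
  else 0

/-- `Q` is a key polynomial for `ν`: `Q` is monic and every `f` with `ε(f) ≥ ε(Q)` satisfies
`deg f ≥ deg Q`. -/
def IsKeyPoly [Module ℚ Γ] (ν : AddValuation (Polynomial K) (WithTop Γ))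
    (Q : Polynomial K) : Prop :=
  Q.Monic ∧ 0 < Q.natDegree ∧
    ∀ f : Polynomial K, 0 < f.natDegree → eps ν Q ≤ eps ν f → Q.natDegree ≤ f.natDegree

/-- The `i`-th coefficient of the `q`-expansion of a polynomial. -/
noncomputable def qCoeff (q : Polynomial K) : ℕ → Polynomial K → Polynomial K
  | 0, p => p % q
  | n + 1, p => qCoeff q n (p / q)

/-- The `q`-truncation `ν_q` of `ν`:  `ν_q(p) = min_i ν(p_i q^i)` where `p = Σ p_i q^i`
is the `q`-expansion of `p`. -/
noncomputable def trunc (ν : AddValuation (Polynomial K) (WithTop Γ)) (q p : Polynomial K) :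
    WithTop Γ :=
  (Finset.range (p.natDegree + 1)).inf fun i => ν (qCoeff q i p * q ^ i)

variable {L : Type*} [Field L] [Algebra K L]

/-- `δ(f)`: the maximal value `μ(x - a)` over the roots `a` of `f` in `L`
(junk value `0` if `f` has no roots in `L`). -/
noncomputable def delta (μ : AddValuation (Polynomial L) (WithTop Γ)) (f : Polynomial K) : Γ :=
  letI := Classical.decEq L
  if h : ((f.map (algebraMap K L)).roots.toFinset).Nonempty then
    ((f.map (algebraMap K L)).roots.toFinset).sup' h fun a => aval μ (X - C a)
  else 0

/-- `μ` on `L[x]` extends `ν` on `K[x]`. -/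
def IsExtension (μ : AddValuation (Polynomial L) (WithTop Γ))
    (ν : AddValuation (Polynomial K) (WithTop Γ)) : Prop :=
  ∀ f : Polynomial K, μ (f.map (algebraMap K L)) = ν f

/-- `w` on `K(x)` extends `ν` on `K[x]`. -/
def ExtendsToRatFunc (w : AddValuation (RatFunc K) (WithTop Γ))
    (ν : AddValuation (Polynomial K) (WithTop Γ)) : Prop :=
  ∀ p : Polynomial K, w (algebraMap (Polynomial K) (RatFunc K) p) = ν p

/-- The residue of `f` is transcendental over the residue field `Kν`:  every polynomial with
coefficients in the valuation ring of `K`, at least one of which is a unit, keeps value `0`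
when evaluated at `f`. -/
def ResidueTranscendentalElem (w : AddValuation (RatFunc K) (WithTop Γ)) (f : RatFunc K) : Prop :=
  ∀ (n : ℕ) (c : ℕ → K),
    (∀ i ≤ n, 0 ≤ w (algebraMap K (RatFunc K) (c i))) →
    (∃ i ≤ n, w (algebraMap K (RatFunc K) (c i)) = 0) →
    w (∑ i ∈ Finset.range (n + 1), algebraMap K (RatFunc K) (c i) * f ^ i) = 0

/-- The residue of `g` is algebraic over the residue field `Kν`: some polynomial with
coefficients in the valuation ring of `K`, at least one of which is a unit, gets positive
value when evaluated at `g`. -/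
def ResidueAlgebraicElem (w : AddValuation (RatFunc K) (WithTop Γ)) (g : RatFunc K) : Prop :=
  ∃ (n : ℕ) (c : ℕ → K),
    (∀ i ≤ n, 0 ≤ w (algebraMap K (RatFunc K) (c i))) ∧
    (∃ i ≤ n, w (algebraMap K (RatFunc K) (c i)) = 0) ∧
    0 < w (∑ i ∈ Finset.range (n + 1), algebraMap K (RatFunc K) (c i) * g ^ i)

/-- `w` is residue-transcendental: some `f` with `w f = 0` has transcendental residue. -/
def IsResidueTranscendental (w : AddValuation (RatFunc K) (WithTop Γ)) : Prop :=
  ∃ f : RatFunc K, w f = 0 ∧ ResidueTranscendentalElem w f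

/-- `w` is value-transcendental: some value `w f` is torsion-free over the value group
`νK` of `K`, i.e. `n ν(f) ∉ νK` for every `n ≥ 1`. -/
def IsValueTranscendental (w : AddValuation (RatFunc K) (WithTop Γ)) : Prop :=
  ∃ f : RatFunc K, f ≠ 0 ∧
    ∀ n : ℕ, 0 < n → ∀ c : K, c ≠ 0 → w (f ^ n) ≠ w (algebraMap K (RatFunc K) c)

/-- `w` is valuation-transcendental: it is value-transcendental or residue-transcendental. -/
def IsValuationTranscendental (w : AddValuation (RatFunc K) (WithTop Γ)) : Prop :=
  IsValueTranscendental w ∨ IsResidueTranscendental w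

end KeyPolyDefs

section MinimalPairDefs

variable {Γ : Type*} [AddCommGroup Γ] [LinearOrder Γ] [IsOrderedAddMonoid Γ] {L : Type*} [Field L]

/-- `(a, d)` is a minimal pair for the valuation (w.r.t. the extension `μ` to `L[x]`):
every `b` with `μ(b - a) ≥ d` satisfies `[K(b) : K] ≥ [K(a) : K]`. -/
def IsMinimalPair (K : Type*) [Field K] [Algebra K L]
    (μ : AddValuation (Polynomial L) (WithTop Γ)) (a : L) (d : Γ) : Prop :=
  ∀ b : L, (d : WithTop Γ) ≤ μ (C (b - a)) →
    (minpoly K a).natDegree ≤ (minpoly K b).natDegree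

/-- `(a, d)` is a minimal pair of definition: a minimal pair with `μ(x - a) = d ≥ μ(x - b)`
for every `b ∈ L`. -/
def IsMinimalPairOfDefinition (K : Type*) [Field K] [Algebra K L]
    (μ : AddValuation (Polynomial L) (WithTop Γ)) (a : L) (d : Γ) : Prop :=
  IsMinimalPair K μ a d ∧ μ (X - C a) = (d : WithTop Γ) ∧
    ∀ b : L, μ (X - C b) ≤ (d : WithTop Γ)

end MinimalPairDefs


section DeltaEqEpsHelpers

open Multiset in
lemma coeff_eval₂_eq_hasseDeriv' {R : Type*} [CommRing R] (p : R[X]) (r : ℕ) :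
    (p.eval₂ (C.comp C) (X + C X)).coeff r = p.hasseDeriv r := by
  induction p using Polynomial.induction_on' with
  | add p q hp hq => simp [eval₂_add, coeff_add, hp, hq, map_add]
  | monomial n c =>
    rw [eval₂_monomial, hasseDeriv_monomial]
    rw [RingHom.comp_apply, coeff_C_mul, coeff_X_add_C_pow]
    rw [← C_eq_natCast, ← C_mul_X_pow_eq_monomial]
    rw [C_mul]
    ring

lemma hasseDeriv_linear_prod {R : Type*} [CommRing R] (t : Multiset R) (r : ℕ)
    (hr : r ≤ Multiset.card t) :
    hasseDeriv r ((t.map fun a => X - C a).prod)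
      = ((t.powersetCard (Multiset.card t - r)).map
          (fun u => (u.map fun a => (X : R[X]) - C a).prod)).sum := by
  rw [← coeff_eval₂_eq_hasseDeriv']
  have h1 : ((t.map fun a => (X : R[X]) - C a).prod).eval₂ (C.comp C) (X + C X)
      = ((t.map fun a => (X : R[X]) - C a).map (fun b => X + C b)).prod := by
    rw [eval₂_multiset_prod, Multiset.map_map, Multiset.map_map]
    congr 1
    apply Multiset.map_congr rfl
    intro a _
    simp only [Function.comp_apply, eval₂_sub, eval₂_X, eval₂_C,
      RingHom.comp_apply, map_sub]
    ring
  rw [h1]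
  have h2 : r ≤ Multiset.card (t.map fun a => (X : R[X]) - C a) := by
    rwa [Multiset.card_map]
  rw [Multiset.prod_X_add_C_coeff _ h2, Multiset.esymm, Multiset.card_map,
    Multiset.powersetCard_map, Multiset.map_map]
  rfl

lemma hasseDeriv_natDegree_monic {R : Type*} [CommRing R] {p : R[X]} (hp : p.Monic) :
    hasseDeriv p.natDegree p = 1 := by
  ext k
  rw [hasseDeriv_coeff]
  cases k with
  | zero => simp [Nat.choose_self, hp.coeff_natDegree]
  | succ k =>
      rw [coeff_eq_zero_of_natDegree_lt (by omega), mul_zero, coeff_one]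
      simp

lemma map_hasseDeriv' {R S : Type*} [CommRing R] [CommRing S] (φ : R →+* S) (p : R[X]) (r : ℕ) :
    (hasseDeriv r p).map φ = hasseDeriv r (p.map φ) := by
  ext k
  rw [coeff_map, hasseDeriv_coeff, hasseDeriv_coeff, coeff_map, map_mul, map_natCast]

lemma coe_add_lt' {Γ : Type*} [AddCommGroup Γ] [LinearOrder Γ] [IsOrderedAddMonoid Γ] {c1 c2 : Γ} {x y : WithTop Γ}
    (h1 : (c1 : WithTop Γ) ≤ x) (h2 : (c2 : WithTop Γ) < y) :
    ((c1 + c2 : Γ) : WithTop Γ) < x + y := by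
  cases x with
  | top => rw [top_add]; exact WithTop.coe_lt_top _
  | coe x =>
      cases y with
      | top => rw [add_top]; exact WithTop.coe_lt_top _
      | coe y =>
          rw [← WithTop.coe_add, WithTop.coe_lt_coe]
          exact add_lt_add_of_le_of_lt (WithTop.coe_le_coe.mp h1) (WithTop.coe_lt_coe.mp h2)

section valhelpers
variable {L : Type*} [Field L] {Γ : Type*} [AddCommGroup Γ] [LinearOrder Γ] [IsOrderedAddMonoid Γ]
  (μ : AddValuation (Polynomial L) (WithTop Γ))

lemma coe_aval' (hμ : TrivialSupport μ) {p : Polynomial L} (hp : p ≠ 0) :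
    μ p = ((aval μ p : Γ) : WithTop Γ) := by
  have h : μ p ≠ ⊤ := fun h => hp (hμ p h)
  rcases WithTop.ne_top_iff_exists.mp h with ⟨x, hx⟩
  rw [← hx, aval, ← hx, WithTop.untopD_coe]

lemma mu_lin_prod (hμ : TrivialSupport μ) (u : Multiset L) :
    μ ((u.map fun a => X - C a).prod)
      = (((u.map fun a => aval μ (X - C a)).sum : Γ) : WithTop Γ) := by
  induction u using Multiset.induction_on with
  | empty => simp [μ.map_one]
  | cons a u ih =>
      rw [Multiset.map_cons, Multiset.prod_cons, μ.map_mul, ih, Multiset.map_cons,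
        Multiset.sum_cons, WithTop.coe_add, coe_aval' μ hμ (X_sub_C_ne_zero a)]

lemma le_mu_sum {x : Γ} {Q : Multiset (Polynomial L)}
    (h : ∀ q ∈ Q, (x : WithTop Γ) ≤ μ q) : (x : WithTop Γ) ≤ μ Q.sum := by
  induction Q using Multiset.induction_on with
  | empty => simp [μ.map_zero]
  | cons a Q ih =>
      rw [Multiset.sum_cons]
      refine le_trans (le_min (h a (Multiset.mem_cons_self a Q))
        (ih fun q hq => h q (Multiset.mem_cons_of_mem hq))) (μ.map_add _ _)

lemma lt_mu_sum {x : Γ} {Q : Multiset (Polynomial L)}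
    (h : ∀ q ∈ Q, (x : WithTop Γ) < μ q) : (x : WithTop Γ) < μ Q.sum := by
  induction Q using Multiset.induction_on with
  | empty => rw [Multiset.sum_zero, μ.map_zero]; exact WithTop.coe_lt_top x
  | cons a Q ih =>
      rw [Multiset.sum_cons]
      refine lt_of_lt_of_le (lt_min (h a (Multiset.mem_cons_self a Q))
        (ih fun q hq => h q (Multiset.mem_cons_of_mem hq))) (μ.map_add _ _)

lemma lt_mu_finset_sum {ι : Type*} {x : Γ} {T : Finset ι} {h : ι → Polynomial L}
    (hx : ∀ i ∈ T, (x : WithTop Γ) < μ (h i)) : (x : WithTop Γ) < μ (∑ i ∈ T, h i) := by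
  classical
  induction T using Finset.induction_on with
  | empty => rw [Finset.sum_empty, μ.map_zero]; exact WithTop.coe_lt_top x
  | insert a T hni ih =>
      rw [Finset.sum_insert hni]
      refine lt_of_lt_of_le (lt_min (hx a (Finset.mem_insert_self a T))
        (ih fun i hi => hx i (Finset.mem_insert_of_mem hi))) (μ.map_add _ _)

lemma mu_hasseDeriv_ge (hμ : TrivialSupport μ) (t : Multiset L) (d : Γ)
    (hd : ∀ a ∈ t, aval μ (X - C a) ≤ d) (r : ℕ) :
    (((t.map fun a => aval μ (X - C a)).sum - r • d : Γ) : WithTop Γ)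
      ≤ μ (hasseDeriv r ((t.map fun a => X - C a).prod)) := by
  classical
  by_cases hr : r ≤ Multiset.card t
  · rw [hasseDeriv_linear_prod _ _ hr]
    apply le_mu_sum μ
    intro q hq
    rw [Multiset.mem_map] at hq
    obtain ⟨u, hu, rfl⟩ := hq
    rw [Multiset.mem_powersetCard] at hu
    obtain ⟨hut, hcard⟩ := hu
    rw [mu_lin_prod μ hμ, WithTop.coe_le_coe]
    have hsplit : t - u + u = t := tsub_add_cancel_of_le hut
    have hsum : (t.map fun a => aval μ (X - C a)).sum
        = ((t - u).map fun a => aval μ (X - C a)).sum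
          + (u.map fun a => aval μ (X - C a)).sum := by
      conv_lhs => rw [← hsplit]
      rw [Multiset.map_add, Multiset.sum_add]
    have hcs : Multiset.card (t - u) = r := by
      rw [Multiset.card_sub hut, hcard]; omega
    have hb : ((t - u).map fun a => aval μ (X - C a)).sum ≤ r • d := by
      have := Multiset.sum_le_card_nsmul ((t - u).map fun a => aval μ (X - C a)) d ?_
      · rwa [Multiset.card_map, hcs] at this
      · intro x hx
        rw [Multiset.mem_map] at hx
        obtain ⟨a, ha, rfl⟩ := hx
        exact hd a (Multiset.mem_of_le tsub_le_self ha)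
    rw [hsum, add_sub_right_comm]
    have h0 : ((t - u).map fun a => aval μ (X - C a)).sum - r • d ≤ 0 := sub_nonpos.mpr hb
    simpa using add_le_add_right h0 ((u.map fun a => aval μ (X - C a)).sum)
  · rw [hasseDeriv_eq_zero_of_lt_natDegree _ r
      (by rw [natDegree_multiset_prod_X_sub_C_eq_card]; omega), μ.map_zero]
    exact le_top

lemma mu_hasseDeriv_gt (hμ : TrivialSupport μ) (t : Multiset L) (d : Γ)
    (hd : ∀ a ∈ t, aval μ (X - C a) < d) {r : ℕ} (hr0 : 0 < r) :
    (((t.map fun a => aval μ (X - C a)).sum - r • d : Γ) : WithTop Γ)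
      < μ (hasseDeriv r ((t.map fun a => X - C a).prod)) := by
  classical
  by_cases hr : r ≤ Multiset.card t
  · rw [hasseDeriv_linear_prod _ _ hr]
    apply lt_mu_sum μ
    intro q hq
    rw [Multiset.mem_map] at hq
    obtain ⟨u, hu, rfl⟩ := hq
    rw [Multiset.mem_powersetCard] at hu
    obtain ⟨hut, hcard⟩ := hu
    rw [mu_lin_prod μ hμ, WithTop.coe_lt_coe]
    have hsplit : t - u + u = t := tsub_add_cancel_of_le hut
    have hsum : (t.map fun a => aval μ (X - C a)).sum
        = ((t - u).map fun a => aval μ (X - C a)).sum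
          + (u.map fun a => aval μ (X - C a)).sum := by
      conv_lhs => rw [← hsplit]
      rw [Multiset.map_add, Multiset.sum_add]
    have hcs : Multiset.card (t - u) = r := by
      rw [Multiset.card_sub hut, hcard]; omega
    obtain ⟨b, hb⟩ : ∃ b, b ∈ t - u := by
      apply Multiset.exists_mem_of_ne_zero
      intro h0
      rw [h0] at hcs; simp at hcs; omega
    have hb' : ((t - u).map fun a => aval μ (X - C a)).sum < r • d := by
      have hrest : (((t - u).erase b).map fun a => aval μ (X - C a)).sum ≤ (r - 1) • d := by
        have := Multiset.sum_le_card_nsmul (((t - u).erase b).map fun a => aval μ (X - C a)) d ?_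
        · rwa [Multiset.card_map, Multiset.card_erase_of_mem hb, hcs] at this
        · intro x hx
          rw [Multiset.mem_map] at hx
          obtain ⟨a, ha, rfl⟩ := hx
          exact le_of_lt (hd a (Multiset.mem_of_le tsub_le_self
            (Multiset.mem_of_mem_erase ha)))
      have hbd : aval μ (X - C b) < d := hd b (Multiset.mem_of_le tsub_le_self hb)
      calc ((t - u).map fun a => aval μ (X - C a)).sum
          = aval μ (X - C b) + (((t - u).erase b).map fun a => aval μ (X - C a)).sum := by
            conv_lhs => rw [← Multiset.cons_erase hb]
            rw [Multiset.map_cons, Multiset.sum_cons]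
        _ < d + (r - 1) • d := add_lt_add_of_lt_of_le hbd hrest
        _ = r • d := by
            rw [← succ_nsmul']
            congr 1
            omega
    rw [hsum, add_sub_right_comm]
    have h0 : ((t - u).map fun a => aval μ (X - C a)).sum - r • d < 0 := sub_neg.mpr hb'
    simpa using add_lt_add_right h0 ((u.map fun a => aval μ (X - C a)).sum)
  · rw [hasseDeriv_eq_zero_of_lt_natDegree _ r
      (by rw [natDegree_multiset_prod_X_sub_C_eq_card]; omega), μ.map_zero]
    exact WithTop.coe_lt_top _

end valhelpers

end DeltaEqEpsHelpers

/-- For every monic polynomial `f ∈ K[x]`,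
`δ(f) = max{μ(x - a) : a a root of f} = ε(f) = max_{r ≥ 1} (ν(f) - ν(∂_r f))/r`. -/
theorem delta_eq_eps {K : Type*} [Field K] {Γ : Type*} [AddCommGroup Γ] [LinearOrder Γ] [IsOrderedAddMonoid Γ]
    [Module ℚ Γ] [PosSMulStrictMono ℚ Γ] [PosSMulReflectLT ℚ Γ] {L : Type*} [Field L] [Algebra K L] [IsAlgClosure K L]
    (ν : AddValuation (Polynomial K) (WithTop Γ)) (μ : AddValuation (Polynomial L) (WithTop Γ))
    (hν : TrivialSupport ν) (hμ : TrivialSupport μ) (hext : IsExtension μ ν)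
    (f : Polynomial K) (hf : f.Monic) (hdeg : 0 < f.natDegree) :
    delta μ f = eps ν f := by
  letI := Classical.decEq L
  letI := Classical.decEq Γ
  letI : DecidablePred (fun r : ℕ => f.hasseDeriv r ≠ 0) := Classical.decPred _
  haveI : IsAlgClosed L := IsAlgClosure.isAlgClosed (R := K)
  have hinj : Function.Injective (algebraMap K L) := (algebraMap K L).injective
  set g : Polynomial L := f.map (algebraMap K L) with hg_def
  have hg : g.Monic := hf.map (algebraMap K L)
  have hndeg : g.natDegree = f.natDegree := hf.natDegree_map (algebraMap K L)
  set s : Multiset L := g.roots with hs_def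
  have hsplits : g.Splits := IsAlgClosed.splits g
  have hcard : Multiset.card s = f.natDegree := by
    rw [hs_def, (splits_iff_card_roots).mp hsplits, hndeg]
  have hprod : (s.map fun a => X - C a).prod = g :=
    prod_multiset_X_sub_C_of_monic_of_roots_card_eq hg (by rw [← hs_def, hcard, hndeg])
  set v : L → Γ := fun a => aval μ (X - C a) with hv_def
  set S : Γ := (s.map v).sum with hS_def
  have hνf : ν f = ((S : Γ) : WithTop Γ) := by
    rw [← hext f, ← hg_def, ← hprod, mu_lin_prod μ hμ s]
  have havalf : aval ν f = S := by rw [aval, hνf, WithTop.untopD_coe]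
  have hhd : ∀ r : ℕ, ν (f.hasseDeriv r) = μ (g.hasseDeriv r) := fun r => by
    rw [← hext (f.hasseDeriv r), map_hasseDeriv', hg_def]
  have hsne : s ≠ 0 := by
    intro h0; rw [h0] at hcard; simp at hcard; omega
  have htne : s.toFinset.Nonempty := by
    obtain ⟨a, ha⟩ := Multiset.exists_mem_of_ne_zero hsne
    exact ⟨a, Multiset.mem_toFinset.mpr ha⟩
  have hdelta : delta μ f = s.toFinset.sup' htne v := by
    rw [delta, dif_pos htne]
  set Δ : Γ := s.toFinset.sup' htne v with hΔ_def
  have hΔle : ∀ a ∈ s, v a ≤ Δ := fun a ha => Finset.le_sup' v (Multiset.mem_toFinset.mpr ha)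
  obtain ⟨a0, ha0s, ha0⟩ : ∃ a ∈ s.toFinset, Δ = v a := Finset.exists_mem_eq_sup' htne v
  have hεne : (epsSupport f).Nonempty := by
    refine ⟨f.natDegree, ?_⟩
    rw [epsSupport, Finset.mem_filter, Finset.mem_Icc]
    refine ⟨⟨hdeg, le_rfl⟩, ?_⟩
    rw [hasseDeriv_natDegree_monic hf]
    exact one_ne_zero
  rw [hdelta, eps, dif_pos hεne]
  apply le_antisymm
  · -- Δ ≤ sup' : exhibit the index r* = card of the multiset of maximal roots
    set D : Multiset L := s.filter (fun a => v a = Δ) with hD_def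
    set u0 : Multiset L := s.filter (fun a => ¬ v a = Δ) with hu0_def
    have hDu : D + u0 = s := s.filter_add_not _
    have ha0D : a0 ∈ D := by
      rw [hD_def, Multiset.mem_filter]
      exact ⟨Multiset.mem_toFinset.mp ha0s, ha0.symm⟩
    set rs : ℕ := Multiset.card D with hrs_def
    have hrs1 : 1 ≤ rs := by
      have : 0 < Multiset.card D := Multiset.card_pos.mpr fun h0 => by
        rw [h0] at ha0D; exact absurd ha0D (Multiset.notMem_zero a0)
      omega
    have hrsn : rs ≤ f.natDegree := by
      rw [hrs_def, ← hcard]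
      exact Multiset.card_le_card (Multiset.filter_le _ s)
    set g1 : Polynomial L := (D.map fun a => X - C a).prod with hg1_def
    set g2 : Polynomial L := (u0.map fun a => X - C a).prod with hg2_def
    have hg12 : g1 * g2 = g := by
      rw [hg1_def, hg2_def, ← Multiset.prod_add, ← Multiset.map_add, hDu, hprod]
    have hg1monic : g1.Monic :=
      monic_multiset_prod_of_monic _ _ fun a _ => monic_X_sub_C a
    have hg1deg : g1.natDegree = rs := by
      rw [hg1_def, natDegree_multiset_prod_X_sub_C_eq_card]
    have hdg1 : hasseDeriv rs g1 = 1 := by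
      rw [← hg1deg]; exact hasseDeriv_natDegree_monic hg1monic
    have hSD : (D.map v).sum = rs • Δ := by
      have : D.map v = Multiset.replicate rs Δ := by
        rw [Multiset.eq_replicate]
        constructor
        · rw [Multiset.card_map]
        · intro b hb
          rw [Multiset.mem_map] at hb
          obtain ⟨a, ha, rfl⟩ := hb
          rw [hD_def, Multiset.mem_filter] at ha
          exact ha.2
      rw [this, Multiset.sum_replicate]
    set S0 : Γ := (u0.map v).sum with hS0_def
    have hS_split : S = rs • Δ + S0 := by
      rw [hS_def, ← hDu, Multiset.map_add, Multiset.sum_add, hSD]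
    have hμg2 : μ g2 = ((S0 : Γ) : WithTop Γ) := mu_lin_prod μ hμ u0
    have hmem : ((rs, 0) : ℕ × ℕ) ∈ Finset.HasAntidiagonal.antidiagonal rs := by simp
    have hhd_mul : hasseDeriv rs g
        = g2 + ∑ ij ∈ (Finset.HasAntidiagonal.antidiagonal rs).erase (rs, 0),
            hasseDeriv ij.1 g1 * hasseDeriv ij.2 g2 := by
      rw [← hg12, hasseDeriv_mul, ← Finset.add_sum_erase _ _ hmem, hdg1, hasseDeriv_zero',
        one_mul]
    have hrest : ((S0 : Γ) : WithTop Γ)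
        < μ (∑ ij ∈ (Finset.HasAntidiagonal.antidiagonal rs).erase (rs, 0),
            hasseDeriv ij.1 g1 * hasseDeriv ij.2 g2) := by
      apply lt_mu_finset_sum μ
      intro ij hij
      have hij1 := Finset.mem_erase.mp hij
      have hijsum : ij.1 + ij.2 = rs := Finset.HasAntidiagonal.mem_antidiagonal.mp hij1.2
      have hj : 0 < ij.2 := by
        rcases Nat.eq_zero_or_pos ij.2 with h0 | h0
        · exfalso
          apply hij1.1
          have : ij.1 = rs := by omega
          exact Prod.ext this h0
        · exact h0
      rw [μ.map_mul]
      have h1 : (((D.map v).sum - ij.1 • Δ : Γ) : WithTop Γ) ≤ μ (hasseDeriv ij.1 g1) :=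
        mu_hasseDeriv_ge μ hμ D Δ
          (fun a ha => le_of_eq (Multiset.mem_filter.mp ha).2) ij.1
      have h2 : (((u0.map v).sum - ij.2 • Δ : Γ) : WithTop Γ) < μ (hasseDeriv ij.2 g2) :=
        mu_hasseDeriv_gt μ hμ u0 Δ
          (fun a ha => lt_of_le_of_ne (hΔle a (Multiset.mem_of_le (Multiset.filter_le _ s) ha))
            (Multiset.mem_filter.mp ha).2) hj
      have hcomb := coe_add_lt' h1 h2
      have heq : ((D.map v).sum - ij.1 • Δ) + ((u0.map v).sum - ij.2 • Δ) = S0 := by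
        rw [hSD, hS0_def]
        have : ij.1 • Δ + ij.2 • Δ = rs • Δ := by rw [← add_nsmul, hijsum]
        rw [← this]
        abel
      rwa [heq] at hcomb
    have hμhd : μ (hasseDeriv rs g) = ((S0 : Γ) : WithTop Γ) := by
      rw [hhd_mul, μ.map_add_of_distinct_val (by rw [hμg2]; exact ne_of_lt hrest), hμg2]
      exact min_eq_left (le_of_lt hrest)
    have hνhd : ν (f.hasseDeriv rs) = ((S0 : Γ) : WithTop Γ) := by rw [hhd rs, hμhd]
    have hfd_ne : f.hasseDeriv rs ≠ 0 := by
      intro h0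
      rw [h0, ν.map_zero] at hνhd
      exact (WithTop.coe_ne_top (a := S0)) hνhd.symm
    have hrs_mem : rs ∈ epsSupport f := by
      rw [epsSupport, Finset.mem_filter, Finset.mem_Icc]
      exact ⟨⟨hrs1, hrsn⟩, hfd_ne⟩
    have havalhd : aval ν (f.hasseDeriv rs) = S0 := by
      rw [aval, hνhd, WithTop.untopD_coe]
    have hterm : ((rs : ℚ))⁻¹ • (aval ν f - aval ν (f.hasseDeriv rs)) = Δ := by
      rw [havalf, havalhd, hS_split, add_sub_cancel_right, ← Nat.cast_smul_eq_nsmul ℚ,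
        inv_smul_smul₀ (Nat.cast_ne_zero.mpr (by omega) : (rs : ℚ) ≠ 0)]
    calc Δ = ((rs : ℚ))⁻¹ • (aval ν f - aval ν (f.hasseDeriv rs)) := hterm.symm
      _ ≤ _ := Finset.le_sup' (f := fun r : ℕ => ((r : ℚ))⁻¹ • (aval ν f - aval ν (f.hasseDeriv r))) hrs_mem
  · -- sup' ≤ Δ
    apply Finset.sup'_le
    intro r hr
    rw [epsSupport, Finset.mem_filter, Finset.mem_Icc] at hr
    obtain ⟨⟨hr1, hrn⟩, hrne⟩ := hr
    have hgd_ne : g.hasseDeriv r ≠ 0 := by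
      rw [← map_hasseDeriv']
      exact (Polynomial.map_ne_zero_iff hinj).mpr hrne
    have hb : (((S - r • Δ : Γ)) : WithTop Γ) ≤ ν (f.hasseDeriv r) := by
      rw [hhd r, ← hprod]
      exact mu_hasseDeriv_ge μ hμ s Δ hΔle r
    have hfdval : ν (f.hasseDeriv r) = ((aval ν (f.hasseDeriv r) : Γ) : WithTop Γ) :=
      coe_aval' ν hν hrne
    rw [hfdval, WithTop.coe_le_coe] at hb
    have hkey : aval ν f - aval ν (f.hasseDeriv r) ≤ (r : ℚ) • Δ := by
      rw [havalf, Nat.cast_smul_eq_nsmul ℚ]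
      have := sub_le_sub_left hb S
      calc S - aval ν (f.hasseDeriv r) ≤ S - (S - r • Δ) := this
        _ = r • Δ := by abel
    calc ((r : ℚ))⁻¹ • (aval ν f - aval ν (f.hasseDeriv r))
        ≤ ((r : ℚ))⁻¹ • ((r : ℚ) • Δ) :=
          smul_le_smul_of_nonneg_left hkey (by positivity)
      _ = Δ := inv_smul_smul₀ (Nat.cast_ne_zero.mpr (by omega) : (r : ℚ) ≠ 0) _
end

section
/- Let K be a field, ν a valuation on K[x] with trivial support, K̄ an algebraic closure of K, and μ an extension of ν to K̄[x]. Let Q ∈ K[x] be a monic irreducible polynomial and choose a root a of Q in K̄ such that μ(x−a) = δ(Q). Then Q is a key polynomial for ν if and only if (a, δ(Q)) is a minimal pair for ν. -/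
open Polynomial

section MainProofAux


section Aux
variable {Γ : Type*} [AddCommGroup Γ] [LinearOrder Γ] [IsOrderedAddMonoid Γ]

lemma coe_finset_sum' {ι : Type*} (s : Finset ι) (g : ι → Γ) :
    ((∑ i ∈ s, g i : Γ) : WithTop Γ) = ∑ i ∈ s, (g i : WithTop Γ) := by
  classical
  induction s using Finset.induction with
  | empty => simp
  | @insert a s ha ih => rw [Finset.sum_insert ha, Finset.sum_insert ha, WithTop.coe_add, ih]

lemma addval_prod {R : Type*} [CommRing R] (μ : AddValuation R (WithTop Γ)) {ι : Type*}
    (s : Finset ι) (g : ι → R) : μ (∏ i ∈ s, g i) = ∑ i ∈ s, μ (g i) := by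
  classical
  induction s using Finset.induction with
  | empty => simp
  | @insert a s ha ih =>
    rw [Finset.prod_insert ha, Finset.sum_insert ha, AddValuation.map_mul, ih]

variable {K : Type*} [Field K]

lemma aval_spec' (ν : AddValuation (Polynomial K) (WithTop Γ)) {p : Polynomial K}
    (hp : ν p ≠ ⊤) : ν p = ((aval ν p : Γ) : WithTop Γ) := by
  cases h : ν p with
  | top => exact absurd h hp
  | coe a => rw [aval, h]; rfl

lemma aval_spec (μ : AddValuation (Polynomial K) (WithTop Γ)) (hμ : TrivialSupport μ)
    {p : Polynomial K} (hp : p ≠ 0) : μ p = ((aval μ p : Γ) : WithTop Γ) :=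
  aval_spec' μ (fun h => hp (hμ p h))

lemma mem_epsSupport {f : Polynomial K} {r : ℕ} :
    r ∈ epsSupport f ↔ (1 ≤ r ∧ r ≤ f.natDegree) ∧ hasseDeriv r f ≠ 0 := by
  rw [epsSupport, @Finset.mem_filter _ _ (Classical.decPred _), Finset.mem_Icc]

lemma hasseDeriv_map' {L : Type*} [Field L] (φ : K →+* L) (r : ℕ) (f : Polynomial K) :
    (hasseDeriv r f).map φ = hasseDeriv r (f.map φ) := by
  ext n
  simp [coeff_map, hasseDeriv_coeff, map_natCast]

end Aux

lemma hasseDeriv_linear_mul {R : Type*} [CommRing R] (c : R) (p : R[X]) (r : ℕ) :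
    hasseDeriv (r+1) ((X - C c) * p) = (X - C c) * hasseDeriv (r+1) p + hasseDeriv r p := by
  rw [hasseDeriv_mul]
  rw [Finset.Nat.sum_antidiagonal_eq_sum_range_succ_mk]
  have hsub : ({0,1} : Finset ℕ) ⊆ Finset.range (r+1+1) := by
    intro x hx; fin_cases hx <;> simp
  rw [← Finset.sum_subset hsub (by
    intro k hk hk2
    have h2 : 2 ≤ k := by
      simp only [Finset.mem_insert, Finset.mem_singleton] at hk2; omega
    have : hasseDeriv k (X - C c) = 0 := by
      rw [map_sub, hasseDeriv_X (k := k) (by omega), hasseDeriv_C (k := k) c (by omega), sub_zero]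
    simp [this])]
  rw [Finset.sum_insert (by simp), Finset.sum_singleton]
  simp [hasseDeriv_zero', hasseDeriv_one']

lemma hasseDeriv_prod_linear {R : Type*} [CommRing R] {ι : Type*} [DecidableEq ι]
    (s : Finset ι) (b : ι → R) (r : ℕ) :
    hasseDeriv r (∏ i ∈ s, (X - C (b i))) =
      ∑ t ∈ s.powersetCard r, ∏ i ∈ s \ t, (X - C (b i)) := by
  induction s using Finset.induction generalizing r with
  | empty =>
    cases r with
    | zero => simp [hasseDeriv_zero']
    | succ r => simp [hasseDeriv_apply_one (k := r+1) r.succ_pos]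
  | @insert a s ha ih =>
    cases r with
    | zero => simp [hasseDeriv_zero']
    | succ r =>
      rw [Finset.prod_insert ha, hasseDeriv_linear_mul, ih, ih,
        Finset.powersetCard_succ_insert ha]
      rw [Finset.sum_union]
      · congr 1
        · rw [Finset.mul_sum]
          apply Finset.sum_congr rfl
          intro t ht
          have hts : t ⊆ s := (Finset.mem_powersetCard.mp ht).1
          have hat : a ∉ t := fun h => ha (hts h)
          rw [Finset.insert_sdiff_of_notMem s hat]
          rw [Finset.prod_insert (by simp [ha])]
        · rw [Finset.sum_image (by
            intro t ht u hu h
            have hat : a ∉ t := fun hh => ha ((Finset.mem_powersetCard.mp ht).1 hh)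
            have hau : a ∉ u := fun hh => ha ((Finset.mem_powersetCard.mp hu).1 hh)
            rw [← Finset.erase_insert hat, ← Finset.erase_insert hau, h])]
          apply Finset.sum_congr rfl
          intro t ht
          congr 1
          rw [Finset.insert_sdiff_insert, Finset.sdiff_insert_of_notMem ha]
      · rw [Finset.disjoint_right]
        intro t ht ht'
        obtain ⟨u, hu, rfl⟩ := Finset.mem_image.mp ht
        exact ha ((Finset.mem_powersetCard.mp ht').1 (Finset.mem_insert_self a u))

section Main
variable {K : Type*} [Field K] {Γ : Type*} [AddCommGroup Γ] [LinearOrder Γ] [IsOrderedAddMonoid Γ]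
  {L : Type*} [Field L] [Algebra K L]

lemma eps_eq_delta [Module ℚ Γ] [PosSMulStrictMono ℚ Γ] [IsAlgClosed L]
    (ν : AddValuation (Polynomial K) (WithTop Γ)) (μ : AddValuation (Polynomial L) (WithTop Γ))
    (hμ : TrivialSupport μ) (hext : IsExtension μ ν)
    (f : Polynomial K) (hf : 0 < f.natDegree) : eps ν f = delta μ f := by
  letI := Classical.decEq L
  have hf0 : f ≠ 0 := fun h => by simp [h] at hf
  set F : Polynomial L := f.map (algebraMap K L) with hF
  have hF0 : F ≠ 0 := Polynomial.map_ne_zero hf0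
  have hFdeg : F.natDegree = f.natDegree := Polynomial.natDegree_map _
  have hsplit : F.Splits := IsAlgClosed.splits F
  have hcard : Multiset.card F.roots = F.natDegree := Polynomial.splits_iff_card_roots.mp hsplit
  set l : List L := F.roots.toList with hldef
  have hl : (l : Multiset L) = F.roots := F.roots.coe_toList
  set n := l.length with hndef
  have hn : n = f.natDegree := by
    rw [hndef, hldef, Multiset.length_toList, hcard, hFdeg]
  set b : Fin n → L := l.get with hbdef
  have hofn : List.ofFn b = l := List.ofFn_get l
  have hprod : F = C F.leadingCoeff * ∏ i : Fin n, (X - C (b i)) := by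
    conv_lhs => rw [hsplit.eq_prod_roots]
    congr 1
    rw [← hl, ← hofn, Multiset.map_coe, Multiset.prod_coe, List.map_ofFn, List.prod_ofFn]
    rfl
  have hlc : F.leadingCoeff ≠ 0 := leadingCoeff_ne_zero.mpr hF0
  set c₀ : Γ := aval μ (C F.leadingCoeff) with hc₀def
  have hc₀ : μ (C F.leadingCoeff) = (c₀ : WithTop Γ) :=
    aval_spec μ hμ (by simpa using hlc)
  set vi : Fin n → Γ := fun i => aval μ (X - C (b i)) with hvidef
  have hvi : ∀ i, μ (X - C (b i)) = (vi i : WithTop Γ) := fun i =>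
    aval_spec μ hμ (X_sub_C_ne_zero (b i))
  have hnpos : 0 < n := hn ▸ hf
  have hmemroots : ∀ i, b i ∈ F.roots.toFinset := by
    intro i
    rw [Multiset.mem_toFinset, ← hl]
    exact l.get_mem i
  have hne : F.roots.toFinset.Nonempty := ⟨b ⟨0, hnpos⟩, hmemroots _⟩
  set δ : Γ := delta μ f with hδdef
  have hδ : δ = F.roots.toFinset.sup' hne fun a => aval μ (X - C a) := by
    rw [hδdef]
    simp only [delta]
    rw [dif_pos]
  have hviδ : ∀ i, vi i ≤ δ := fun i => by
    rw [hδ]; exact Finset.le_sup' (fun a => aval μ (X - C a)) (hmemroots i)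
  obtain ⟨a₀, ha₀mem, ha₀⟩ := Finset.exists_mem_eq_sup' hne fun a => aval μ (X - C a)
  obtain ⟨i₀, hi₀⟩ : ∃ i, b i = a₀ := by
    rw [Multiset.mem_toFinset, ← hl] at ha₀mem
    exact List.mem_iff_get.mp ha₀mem
  have hi₀δ : vi i₀ = δ := by rw [hvidef]; simp only [hi₀]; rw [hδ, ha₀]
  have hsum : ∀ s : Finset (Fin n),
      μ (∏ i ∈ s, (X - C (b i))) = ((∑ i ∈ s, vi i : Γ) : WithTop Γ) := by
    intro s
    rw [addval_prod, coe_finset_sum']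
    exact Finset.sum_congr rfl fun i _ => hvi i
  have hμF : μ F = ((c₀ + ∑ i, vi i : Γ) : WithTop Γ) := by
    conv_lhs => rw [hprod]
    rw [AddValuation.map_mul, hc₀, hsum, ← WithTop.coe_add]
  have havalf : aval ν f = c₀ + ∑ i, vi i := by
    rw [aval, ← hext f, hμF]; rfl
  have hνf : ν f = ((c₀ + ∑ i, vi i : Γ) : WithTop Γ) := by rw [← hext f, hμF]
  have hDval : ∀ r : ℕ, ν (hasseDeriv r f) = μ (hasseDeriv r F) := by
    intro r
    rw [← hext (hasseDeriv r f), hasseDeriv_map']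
  have hDF : ∀ r : ℕ, hasseDeriv r F = C F.leadingCoeff *
      ∑ t ∈ Finset.powersetCard r (Finset.univ : Finset (Fin n)),
        ∏ i ∈ Finset.univ \ t, (X - C (b i)) := by
    intro r
    conv_lhs => rw [hprod, ← smul_eq_C_mul]
    rw [map_smul, hasseDeriv_prod_linear, smul_eq_C_mul]
  have claimA : ∀ r : ℕ,
      ((c₀ + ∑ i, vi i - r • δ : Γ) : WithTop Γ) ≤ ν (hasseDeriv r f) := by
    intro r
    rw [hDval r, hDF r, AddValuation.map_mul, hc₀]
    have hbound : ((∑ i, vi i - r • δ : Γ) : WithTop Γ) ≤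
        μ (∑ t ∈ Finset.powersetCard r (Finset.univ : Finset (Fin n)),
          ∏ i ∈ Finset.univ \ t, (X - C (b i))) := by
      apply AddValuation.map_le_sum
      intro t ht
      rw [hsum, WithTop.coe_le_coe]
      have htc : t.card = r := (Finset.mem_powersetCard.mp ht).2
      have h1 : ∑ i ∈ t, vi i ≤ r • δ := by
        rw [← htc]
        exact Finset.sum_le_card_nsmul t vi δ fun i _ => hviδ i
      have h2 : ∑ i ∈ Finset.univ \ t, vi i + ∑ i ∈ t, vi i = ∑ i, vi i :=
        Finset.sum_sdiff (Finset.subset_univ t)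
      rw [sub_le_iff_le_add, ← h2]
      exact add_le_add_right h1 _
    calc ((c₀ + ∑ i, vi i - r • δ : Γ) : WithTop Γ)
        = (c₀ : WithTop Γ) + ((∑ i, vi i - r • δ : Γ) : WithTop Γ) := by
          rw [← WithTop.coe_add, add_sub_assoc]
      _ ≤ _ := add_le_add_right hbound _
  -- Claim B: the index r₀ achieving equality
  set t₀ : Finset (Fin n) := Finset.univ.filter (fun i => vi i = δ) with ht₀def
  have hi₀t₀ : i₀ ∈ t₀ := by
    rw [ht₀def, Finset.mem_filter]
    exact ⟨Finset.mem_univ _, hi₀δ⟩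
  set r₀ := t₀.card with hr₀def
  have hr₀pos : 0 < r₀ := Finset.card_pos.mpr ⟨i₀, hi₀t₀⟩
  have hr₀le : r₀ ≤ n := by
    rw [hr₀def]
    calc t₀.card ≤ (Finset.univ : Finset (Fin n)).card :=
          Finset.card_le_card (Finset.subset_univ _)
      _ = n := by simp
  have ht₀mem : t₀ ∈ Finset.powersetCard r₀ (Finset.univ : Finset (Fin n)) :=
    Finset.mem_powersetCard.mpr ⟨Finset.subset_univ _, rfl⟩
  have hsumt₀ : ∑ i ∈ t₀, vi i = r₀ • δ := by
    rw [Finset.sum_congr rfl (fun i hi => (Finset.mem_filter.mp hi).2),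
      Finset.sum_const, hr₀def]
  have hstrict : ∀ t ∈ Finset.powersetCard r₀ (Finset.univ : Finset (Fin n)), t ≠ t₀ →
      ∑ i ∈ Finset.univ \ t₀, vi i < ∑ i ∈ Finset.univ \ t, vi i := by
    intro t ht hne'
    have htc : t.card = r₀ := (Finset.mem_powersetCard.mp ht).2
    have hlt : ∑ i ∈ t, vi i < r₀ • δ := by
      have hnsub : ¬ t ⊆ t₀ := fun hsub =>
        hne' (Finset.eq_of_subset_of_card_le hsub (by rw [htc]))
      obtain ⟨j, hjt, hjn⟩ := Finset.not_subset.mp hnsub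
      have hvj : vi j < δ := by
        refine lt_of_le_of_ne (hviδ j) ?_
        intro h
        exact hjn (by rw [ht₀def, Finset.mem_filter]; exact ⟨Finset.mem_univ _, h⟩)
      calc ∑ i ∈ t, vi i < ∑ _i ∈ t, δ := Finset.sum_lt_sum (fun i _ => hviδ i) ⟨j, hjt, hvj⟩
        _ = r₀ • δ := by rw [Finset.sum_const, htc]
    have e1 : ∑ i ∈ Finset.univ \ t, vi i + ∑ i ∈ t, vi i = ∑ i, vi i :=
      Finset.sum_sdiff (Finset.subset_univ t)
    have e2 : ∑ i ∈ Finset.univ \ t₀, vi i + ∑ i ∈ t₀, vi i = ∑ i, vi i :=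
      Finset.sum_sdiff (Finset.subset_univ t₀)
    have e1' : ∑ i ∈ Finset.univ \ t, vi i = ∑ i, vi i - ∑ i ∈ t, vi i :=
      eq_sub_of_add_eq e1
    have e2' : ∑ i ∈ Finset.univ \ t₀, vi i = ∑ i, vi i - r₀ • δ := by
      rw [← hsumt₀]; exact eq_sub_of_add_eq e2
    rw [e1', e2']
    exact sub_lt_sub_left hlt _
  have hμDr₀ : μ (hasseDeriv r₀ F) =
      ((c₀ + ∑ i ∈ Finset.univ \ t₀, vi i : Γ) : WithTop Γ) := by
    rw [hDF, AddValuation.map_mul, hc₀]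
    rw [← Finset.add_sum_erase _ _ ht₀mem]
    have hrest : μ (∏ i ∈ Finset.univ \ t₀, (X - C (b i))) <
        μ (∑ t ∈ (Finset.powersetCard r₀ (Finset.univ : Finset (Fin n))).erase t₀,
          ∏ i ∈ Finset.univ \ t, (X - C (b i))) := by
      apply AddValuation.map_lt_sum
      · rw [hsum]; exact WithTop.coe_ne_top
      · intro t ht'
        rw [hsum, hsum, WithTop.coe_lt_coe]
        exact hstrict t (Finset.mem_of_mem_erase ht') (Finset.ne_of_mem_erase ht')
    rw [AddValuation.map_add_eq_of_lt_left μ hrest, hsum, ← WithTop.coe_add]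
  have hDr₀ne : hasseDeriv r₀ f ≠ 0 := by
    intro h
    have h2 : ν (hasseDeriv r₀ f) = ⊤ := by rw [h]; exact AddValuation.map_zero ν
    rw [hDval, hμDr₀] at h2
    exact WithTop.coe_ne_top h2
  have havalDr₀ : aval ν (hasseDeriv r₀ f) = c₀ + ∑ i ∈ Finset.univ \ t₀, vi i := by
    rw [aval, hDval, hμDr₀]; rfl
  have hkey : aval ν f - aval ν (hasseDeriv r₀ f) = r₀ • δ := by
    rw [havalf, havalDr₀, ← Finset.sum_sdiff (Finset.subset_univ t₀), hsumt₀]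
    abel
  have hr₀mem : r₀ ∈ epsSupport f := by
    exact mem_epsSupport.mpr ⟨⟨hr₀pos, hn ▸ hr₀le⟩, hDr₀ne⟩
  have hsupne : (epsSupport f).Nonempty := ⟨r₀, hr₀mem⟩
  -- wrap up
  rw [eps, dif_pos hsupne]
  apply le_antisymm
  · apply Finset.sup'_le
    intro s hs
    have hs' := mem_epsSupport.mp hs
    have hs1 : 1 ≤ s := hs'.1.1
    have hsne : f.hasseDeriv s ≠ 0 := hs'.2
    have hfin : ν (f.hasseDeriv s) = ((aval ν (f.hasseDeriv s) : Γ) : WithTop Γ) := by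
      apply aval_spec' ν
      intro h
      rw [hDval, ← hasseDeriv_map'] at h
      exact Polynomial.map_ne_zero hsne (hμ _ h)
    have hA := claimA s
    rw [hfin, WithTop.coe_le_coe] at hA
    have hstep : aval ν f - aval ν (f.hasseDeriv s) ≤ s • δ := by
      have := sub_le_sub_left hA (aval ν f)
      rw [havalf, sub_sub_cancel] at this
      rw [havalf]
      exact this
    rw [inv_smul_le_iff_of_pos (by exact_mod_cast hs1 : (0:ℚ) < (s:ℚ)),
      Nat.cast_smul_eq_nsmul]
    exact hstep
  · have hterm : ((r₀ : ℚ)⁻¹) • (aval ν f - aval ν (f.hasseDeriv r₀)) = δ := by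
      rw [hkey, ← Nat.cast_smul_eq_nsmul ℚ, inv_smul_smul₀ (by exact_mod_cast hr₀pos.ne')]
    calc δ = ((r₀ : ℚ)⁻¹) • (aval ν f - aval ν (f.hasseDeriv r₀)) := hterm.symm
      _ ≤ _ := Finset.le_sup' (fun r : ℕ => ((r:ℚ))⁻¹ • (aval ν f - aval ν (hasseDeriv r f))) hr₀mem

lemma aval_le_delta (μ : AddValuation (Polynomial L) (WithTop Γ)) {f : Polynomial K}
    (hf0 : f ≠ 0) {c : L} (hc : Polynomial.aeval c f = 0) :
    aval μ (X - C c) ≤ delta μ f := by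
  letI := Classical.decEq L
  have hmem : c ∈ (f.map (algebraMap K L)).roots.toFinset := by
    rw [Multiset.mem_toFinset, Polynomial.mem_roots', Polynomial.IsRoot, Polynomial.eval_map,
      ← Polynomial.aeval_def]
    exact ⟨Polynomial.map_ne_zero hf0, hc⟩
  have hne : ((f.map (algebraMap K L)).roots.toFinset).Nonempty := ⟨c, hmem⟩
  simp only [delta]
  rw [dif_pos hne]
  exact Finset.le_sup' (fun x => aval μ (X - C x)) hmem

lemma exists_root_delta [IsAlgClosed L] (μ : AddValuation (Polynomial L) (WithTop Γ))
    {f : Polynomial K} (hf : 0 < f.natDegree) :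
    ∃ c : L, Polynomial.aeval c f = 0 ∧ aval μ (X - C c) = delta μ f := by
  letI := Classical.decEq L
  have hf0 : f ≠ 0 := fun h => by simp [h] at hf
  set F : Polynomial L := f.map (algebraMap K L) with hF
  have hF0 : F ≠ 0 := Polynomial.map_ne_zero hf0
  have hsplit : F.Splits := IsAlgClosed.splits F
  have hcard : Multiset.card F.roots = F.natDegree := Polynomial.splits_iff_card_roots.mp hsplit
  have hne : F.roots.toFinset.Nonempty := by
    rw [Multiset.toFinset_nonempty]
    intro h
    rw [h, Polynomial.natDegree_map] at hcard
    simp only [Multiset.card_zero] at hcard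
    omega
  obtain ⟨c, hcmem, hc⟩ := Finset.exists_mem_eq_sup' hne fun x => aval μ (X - C x)
  refine ⟨c, ?_, ?_⟩
  · have := Multiset.mem_toFinset.mp hcmem
    rw [Polynomial.mem_roots', Polynomial.IsRoot, Polynomial.eval_map,
      ← Polynomial.aeval_def] at this
    exact this.2
  · simp only [delta]
    rw [dif_pos hne, hc]
end Main


/-- Let `Q ∈ K[x]` be monic irreducible and `a` a root of `Q` with
`μ(x - a) = δ(Q)`. Then `Q` is a key polynomial for `ν` if and only if `(a, δ(Q))` is a
minimal pair for `ν`. -/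
theorem isKeyPoly_iff_isMinimalPair {K : Type*} [Field K] {Γ : Type*}
    [AddCommGroup Γ] [LinearOrder Γ] [IsOrderedAddMonoid Γ] [Module ℚ Γ] [PosSMulStrictMono ℚ Γ]
    {L : Type*} [Field L] [Algebra K L] [IsAlgClosure K L]
    (ν : AddValuation (Polynomial K) (WithTop Γ)) (μ : AddValuation (Polynomial L) (WithTop Γ))
    (hν : TrivialSupport ν) (hμ : TrivialSupport μ) (hext : IsExtension μ ν)
    (Q : Polynomial K) (hQmonic : Q.Monic) (hQirr : Irreducible Q)
    (a : L) (ha : Polynomial.aeval a Q = 0)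
    (hamax : μ (X - C a) = ((delta μ Q : Γ) : WithTop Γ)) :
    IsKeyPoly ν Q ↔ IsMinimalPair K μ a (delta μ Q) := by
  haveI : IsAlgClosed L := IsAlgClosure.isAlgClosed (R := K)
  have hQdegpos : 0 < Q.natDegree := hQirr.natDegree_pos
  have hminA : minpoly K a = Q := (minpoly.eq_of_irreducible_of_monic hQirr ha hQmonic).symm
  have hQeps : eps ν Q = delta μ Q := eps_eq_delta ν μ hμ hext Q hQdegpos
  have bridge1 : ∀ b : L, ((delta μ Q : Γ) : WithTop Γ) ≤ μ (C (b - a)) →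
      ((delta μ Q : Γ) : WithTop Γ) ≤ μ (X - C b) := by
    intro b hb
    have h : X - C b = (X - C a) - C (b - a) := by rw [map_sub]; ring
    rw [h]
    exact AddValuation.map_le_sub μ (le_of_eq hamax.symm) hb
  have bridge2 : ∀ b : L, ((delta μ Q : Γ) : WithTop Γ) ≤ μ (X - C b) →
      ((delta μ Q : Γ) : WithTop Γ) ≤ μ (C (b - a)) := by
    intro b hb
    have h : C (b - a) = (X - C a) - (X - C b) := by rw [map_sub]; ring
    rw [h]
    exact AddValuation.map_le_sub μ (le_of_eq hamax.symm) hb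
  constructor
  · rintro ⟨-, -, hkey⟩ b hb
    rw [hminA]
    have hXb := bridge1 b hb
    have hbint : IsIntegral K b := (Algebra.IsAlgebraic.isAlgebraic (R := K) b).isIntegral
    have hg0 : minpoly K b ≠ 0 := minpoly.ne_zero hbint
    have hgdeg : 0 < (minpoly K b).natDegree := minpoly.natDegree_pos hbint
    have hroot : Polynomial.aeval b (minpoly K b) = 0 := minpoly.aeval K b
    have h1 : delta μ Q ≤ aval μ (X - C b) := by
      rw [aval_spec μ hμ (X_sub_C_ne_zero b), WithTop.coe_le_coe] at hXb
      exact hXb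
    have h3 : eps ν Q ≤ eps ν (minpoly K b) := by
      rw [hQeps, eps_eq_delta ν μ hμ hext _ hgdeg]
      exact le_trans h1 (aval_le_delta μ hg0 hroot)
    exact hkey _ hgdeg h3
  · intro hmin
    refine ⟨hQmonic, hQdegpos, ?_⟩
    intro g hgdeg hge
    have hg0 : g ≠ 0 := fun h => by simp [h] at hgdeg
    obtain ⟨c, hcroot, hcval⟩ := exists_root_delta μ hgdeg
    have h1 : delta μ Q ≤ delta μ g := by
      rw [hQeps, eps_eq_delta ν μ hμ hext g hgdeg] at hge
      exact hge
    have hXc : ((delta μ Q : Γ) : WithTop Γ) ≤ μ (X - C c) := by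
      rw [aval_spec μ hμ (X_sub_C_ne_zero c), WithTop.coe_le_coe, hcval]
      exact h1
    have h2 := hmin c (bridge2 c hXc)
    rw [hminA] at h2
    exact le_trans h2 (Polynomial.natDegree_le_of_dvd (minpoly.dvd K c hcroot) hg0)

end MainProofAux
end

section
/- Let K be a field and ν a valuation on K[x] with trivial support. If q ∈ K[x] is a polynomial such that ν = ν_q, then also ν = ν_{q²}. -/
open Polynomial

namespace TruncSqAux
variable {K : Type*} [Field K]

theorem divmod_unique {p s t q : K[X]} (hq : q ≠ 0) (ht : degree t < degree q)
    (h : p = s * q + t) : p / q = s ∧ p % q = t := by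
  have h0 : p = p / q * q + p % q := by
    rw [mul_comm]; exact (EuclideanDomain.div_add_mod p q).symm
  have key : q * (p / q - s) = t - p % q := by
    have h2 := h0.symm.trans h
    linear_combination h2
  have hdeg : degree (t - p % q) < degree q :=
    lt_of_le_of_lt (degree_sub_le _ _) (max_lt ht (EuclideanDomain.mod_lt _ hq))
  have hdiv : p / q = s := by
    by_contra hne
    have hne' : p / q - s ≠ 0 := sub_ne_zero.2 hne
    have h3 : degree q ≤ degree (q * (p / q - s)) := degree_le_mul_left q hne'
    rw [key] at h3
    exact absurd hdeg (not_lt.2 h3)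
  refine ⟨hdiv, ?_⟩
  rw [hdiv, sub_self, mul_zero] at key
  exact (sub_eq_zero.1 key.symm).symm

theorem poly_div_div (p : K[X]) {q r : K[X]} (hq : q ≠ 0) (hr : r ≠ 0) :
    p / q / r = p / (q * r) := by
  have h1 : p = q * (p / q) + p % q := (EuclideanDomain.div_add_mod p q).symm
  have h2 : p / q = r * (p / q / r) + p / q % r := (EuclideanDomain.div_add_mod (p/q) r).symm
  have h : p = (p / q / r) * (q * r) + ((p / q % r) * q + p % q) := by
    calc p = q * (p / q) + p % q := h1
    _ = q * (r * (p / q / r) + p / q % r) + p % q := by rw [← h2]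
    _ = _ := by ring
  have hqd : degree q ≠ ⊥ := by simpa [degree_eq_bot] using hq
  have hdeg : degree ((p / q % r) * q + p % q) < degree (q * r) := by
    rw [degree_mul]
    apply lt_of_le_of_lt (degree_add_le _ _)
    apply max_lt
    · rw [degree_mul]
      calc degree (p / q % r) + degree q < degree r + degree q :=
            WithBot.add_lt_add_right hqd (EuclideanDomain.mod_lt _ hr)
      _ = degree q + degree r := add_comm _ _
    · exact lt_of_lt_of_le (EuclideanDomain.mod_lt _ hq)
        (le_add_of_nonneg_right (zero_le_degree_iff.2 hr))
  exact ((divmod_unique (mul_ne_zero hq hr) hdeg h).1).symm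

theorem qCoeff_eq {q : K[X]} (hq : q ≠ 0) : ∀ (j : ℕ) (p : K[X]),
    qCoeff q j p = (p / q ^ j) % q := by
  intro j
  induction j with
  | zero => intro p; simp [qCoeff]
  | succ n ih =>
    intro p
    have : p / q / q ^ n = p / q ^ (n + 1) := by
      rw [poly_div_div p hq (pow_ne_zero n hq), pow_succ']
    rw [show qCoeff q (n+1) p = qCoeff q n (p / q) from rfl, ih, this]

theorem qCoeff_zero (q : K[X]) : ∀ j : ℕ, qCoeff q j 0 = 0 := by
  intro j
  induction j with
  | zero => simp [qCoeff]
  | succ n ih =>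
    rw [show qCoeff q (n+1) 0 = qCoeff q n (0 / q) from rfl, EuclideanDomain.zero_div, ih]

theorem qCoeff_high {q : K[X]} (hq : 0 < q.natDegree) {p : K[X]} {i : ℕ}
    (hi : p.natDegree < i) : qCoeff q i p = 0 := by
  have hq0 : q ≠ 0 := fun h => by simp [h] at hq
  rw [qCoeff_eq hq0]
  rcases eq_or_ne p 0 with rfl | hp
  · simp
  · have hdlt : degree p < degree (q ^ i) := by
      rw [degree_eq_natDegree (pow_ne_zero i hq0), natDegree_pow]
      calc degree p ≤ (p.natDegree : WithBot ℕ) := degree_le_natDegree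
      _ < ((i * q.natDegree : ℕ) : WithBot ℕ) := by
          exact_mod_cast lt_of_lt_of_le hi (Nat.le_mul_of_pos_right i hq)
    rw [(Polynomial.div_eq_zero_iff (pow_ne_zero i hq0)).2 hdlt, EuclideanDomain.zero_mod]

theorem qCoeff_sq {q : K[X]} (hq : q ≠ 0) (j : ℕ) (p : K[X]) :
    qCoeff (q ^ 2) j p = qCoeff q (2 * j + 1) p * q + qCoeff q (2 * j) p := by
  have hq2 : q ^ 2 ≠ 0 := pow_ne_zero _ hq
  set r := p / q ^ (2 * j) with hr
  have ha : qCoeff q (2 * j) p = r % q := qCoeff_eq hq _ p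
  have hb : qCoeff q (2 * j + 1) p = (r / q) % q := by
    rw [qCoeff_eq hq _ p, hr, pow_succ, ← poly_div_div p (pow_ne_zero _ hq) hq]
  have hP : qCoeff (q ^ 2) j p = r % q ^ 2 := by
    rw [qCoeff_eq hq2 _ p, hr, pow_mul]
  have hqd : degree q ≠ ⊥ := by simpa [degree_eq_bot] using hq
  have hexp : r = (r / q / q) * q ^ 2 + ((r / q % q) * q + r % q) := by
    have h1 : r = q * (r / q) + r % q := (EuclideanDomain.div_add_mod r q).symm
    have h2 : r / q = q * (r / q / q) + r / q % q := (EuclideanDomain.div_add_mod (r/q) q).symm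
    calc r = q * (r / q) + r % q := h1
    _ = q * (q * (r / q / q) + r / q % q) + r % q := by rw [← h2]
    _ = _ := by ring
  have hdeg : degree ((r / q % q) * q + r % q) < degree (q ^ 2) := by
    have hqq : degree (q ^ 2) = degree q + degree q := by
      rw [pow_two, degree_mul]
    rw [hqq]
    apply lt_of_le_of_lt (degree_add_le _ _)
    apply max_lt
    · rw [degree_mul]
      exact WithBot.add_lt_add_right hqd (EuclideanDomain.mod_lt _ hq)
    · exact lt_of_lt_of_le (EuclideanDomain.mod_lt _ hq)
        (le_add_of_nonneg_right (zero_le_degree_iff.2 hq))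
  have := (divmod_unique hq2 hdeg hexp).2
  rw [hP, this, ha, hb]

theorem qCoeff_expand {Q : K[X]} (hQ : 0 < Q.natDegree) : ∀ (N : ℕ) (p : K[X]),
    p.natDegree < N → p = ∑ j ∈ Finset.range N, qCoeff Q j p * Q ^ j := by
  have hQ0 : Q ≠ 0 := fun h => by simp [h] at hQ
  intro N
  induction N with
  | zero => intro p hp; exact absurd hp (Nat.not_lt_zero _)
  | succ N ih =>
    intro p hp
    rw [Finset.sum_range_succ']
    have hfirst : qCoeff Q 0 p * Q ^ 0 = p % Q := by simp [qCoeff]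
    have hrec : ∀ j, qCoeff Q (j + 1) p = qCoeff Q j (p / Q) := fun j => rfl
    rcases eq_or_ne (p / Q) 0 with h0 | h0
    · have hsum : ∀ j ∈ Finset.range N, qCoeff Q (j+1) p * Q ^ (j+1) = 0 := by
        intro j _
        rw [hrec, h0, qCoeff_zero, zero_mul]
      rw [Finset.sum_congr rfl hsum, Finset.sum_const, smul_zero, zero_add, hfirst]
      have := (EuclideanDomain.div_add_mod p Q).symm
      rw [h0, mul_zero, zero_add] at this
      exact this
    · have hp0 : p ≠ 0 := fun h => h0 (by simp [h])
      have hlt : (p / Q).natDegree < N := by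
        have hdlt : degree (p / Q) < degree p :=
          degree_div_lt hp0 (natDegree_pos_iff_degree_pos.1 hQ)
        have := natDegree_lt_natDegree h0 hdlt
        omega
      have hIH := ih (p / Q) hlt
      calc p = Q * (p / Q) + p % Q := (EuclideanDomain.div_add_mod p Q).symm
      _ = Q * (∑ j ∈ Finset.range N, qCoeff Q j (p / Q) * Q ^ j) + p % Q := by rw [← hIH]
      _ = _ := by
          rw [hfirst, Finset.mul_sum]
          congr 1
          apply Finset.sum_congr rfl
          intro j _
          rw [hrec, pow_succ]
          ring

end TruncSqAux

/-- If `ν = ν_q` for some polynomial `q ∈ K[x]`, then also `ν = ν_{q²}`. -/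
theorem trunc_sq_eq_of_trunc_eq {K : Type*} [Field K] {Γ : Type*} [AddCommGroup Γ] [LinearOrder Γ] [IsOrderedAddMonoid Γ]
    (ν : AddValuation (Polynomial K) (WithTop Γ)) (hν : TrivialSupport ν)
    (q : Polynomial K) (hq : 0 < q.natDegree)
    (h : ∀ p : Polynomial K, ν p = trunc ν q p) :
    ∀ p : Polynomial K, ν p = trunc ν (q ^ 2) p := by
  have hq0 : q ≠ 0 := fun h0 => by simp [h0] at hq
  have hQdeg : 0 < (q ^ 2).natDegree := by rw [natDegree_pow]; omega
  -- per-index lower bound for q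
  have lemE : ∀ (p : Polynomial K) (i : ℕ), ν p ≤ ν (qCoeff q i p * q ^ i) := by
    intro p i
    rcases le_or_gt i p.natDegree with hi | hi
    · rw [h p, trunc]
      exact Finset.inf_le (Finset.mem_range.2 (Nat.lt_succ_of_le hi))
    · rw [TruncSqAux.qCoeff_high hq hi, zero_mul, ν.map_zero]
      exact le_top
  -- lower bound on sums of values
  have sum_ge : ∀ (s : Finset ℕ) (f : ℕ → Polynomial K) (c : WithTop Γ),
      (∀ i ∈ s, c ≤ ν (f i)) → c ≤ ν (∑ i ∈ s, f i) := by
    intro s f c hs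
    induction s using Finset.induction with
    | empty => simp [ν.map_zero]
    | @insert a s' hins ih =>
      rw [Finset.sum_insert hins]
      refine le_trans (le_min (hs a (Finset.mem_insert_self _ _)) ?_) (ν.map_add _ _)
      exact ih fun i hi => hs i (Finset.mem_insert_of_mem hi)
  intro p
  apply le_antisymm
  · rw [trunc]
    apply Finset.le_inf
    intro j _
    have hdecomp : qCoeff (q ^ 2) j p * (q ^ 2) ^ j
        = qCoeff q (2 * j) p * q ^ (2 * j) + qCoeff q (2 * j + 1) p * q ^ (2 * j + 1) := by
      rw [TruncSqAux.qCoeff_sq hq0, ← pow_mul, pow_succ]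
      ring
    rw [hdecomp]
    exact le_trans (le_min (lemE p (2 * j)) (lemE p (2 * j + 1))) (ν.map_add _ _)
  · have hexp := TruncSqAux.qCoeff_expand hQdeg (p.natDegree + 1) p (Nat.lt_succ_self _)
    calc trunc ν (q ^ 2) p
        ≤ ν (∑ j ∈ Finset.range (p.natDegree + 1), qCoeff (q ^ 2) j p * (q ^ 2) ^ j) := by
          apply sum_ge
          intro i hi
          rw [trunc]
          exact Finset.inf_le hi
      _ = ν p := by rw [← hexp]
end

section
/- Let K be a field and ν a valuation on K[x] with trivial support, extended to K(x). Suppose ν = ν_q for some q ∈ K[x] and that ν(q) is torsion over νK, i.e., there exist a ∈ K× and a positive integer n with ν(qⁿ/a) = 0. Then the residue (qⁿ/a)ν is transcendental over the residue field Kν; in particular ν is residue-transcendental. -/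
open Polynomial

section AuxLemmas

open Polynomial

variable {K : Type*} [Field K]

private lemma qdiv_aux {q D E : Polynomial K} (hD : D.degree < q.degree) :
    (D + q * E) / q = E ∧ (D + q * E) % q = D := by
  have hq0 : q ≠ 0 := by
    rintro rfl
    simp only [degree_zero] at hD
    exact absurd hD (by simp)
  have h1 := EuclideanDomain.div_add_mod (D + q * E) q
  have h2 : ((D + q * E) % q).degree < q.degree := EuclideanDomain.mod_lt _ hq0
  set u := (D + q * E) / q with hu
  set r := (D + q * E) % q with hr
  have key : q * (u - E) = D - r := by linear_combination h1
  have hu' : u = E := by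
    by_contra hne
    have h3 : u - E ≠ 0 := sub_ne_zero.mpr hne
    have h5 : q.degree ≤ (q * (u - E)).degree := by
      rw [degree_mul]
      exact le_add_of_nonneg_right (zero_le_degree_iff.mpr h3)
    rw [key] at h5
    have h4 : (D - r).degree < q.degree :=
      lt_of_le_of_lt (degree_sub_le _ _) (max_lt hD h2)
    exact absurd h5 (not_le.mpr h4)
  refine ⟨hu', ?_⟩
  have h6 := h1
  rw [hu'] at h6
  linear_combination h6

private lemma qCoeff_sum_aux {q : Polynomial K} (hq : 0 < q.natDegree) :
    ∀ (j M : ℕ) (e : ℕ → K), j < M →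
      qCoeff q j (∑ k ∈ Finset.range M, Polynomial.C (e k) * q ^ k) = Polynomial.C (e j) := by
  have hdq : (0 : WithBot ℕ) < q.degree := natDegree_pos_iff_degree_pos.mp hq
  intro j
  induction j with
  | zero =>
    intro M e hM
    obtain ⟨M', rfl⟩ : ∃ M', M = M' + 1 := ⟨M - 1, by omega⟩
    have hsplit : (∑ k ∈ Finset.range (M' + 1), Polynomial.C (e k) * q ^ k)
        = Polynomial.C (e 0) + q * ∑ k ∈ Finset.range M', Polynomial.C (e (k + 1)) * q ^ k := by
      rw [Finset.sum_range_succ', pow_zero, mul_one, add_comm, Finset.mul_sum]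
      congr 1
      refine Finset.sum_congr rfl fun k _ => ?_
      ring
    rw [hsplit]
    show (Polynomial.C (e 0) + q * _) % q = _
    exact (qdiv_aux (lt_of_le_of_lt (degree_C_le) hdq)).2
  | succ j ih =>
    intro M e hM
    obtain ⟨M', rfl⟩ : ∃ M', M = M' + 1 := ⟨M - 1, by omega⟩
    have hsplit : (∑ k ∈ Finset.range (M' + 1), Polynomial.C (e k) * q ^ k)
        = Polynomial.C (e 0) + q * ∑ k ∈ Finset.range M', Polynomial.C (e (k + 1)) * q ^ k := by
      rw [Finset.sum_range_succ', pow_zero, mul_one, add_comm, Finset.mul_sum]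
      congr 1
      refine Finset.sum_congr rfl fun k _ => ?_
      ring
    have : qCoeff q (j + 1) (∑ k ∈ Finset.range (M' + 1), Polynomial.C (e k) * q ^ k)
        = qCoeff q j ((∑ k ∈ Finset.range (M' + 1), Polynomial.C (e k) * q ^ k) / q) := rfl
    rw [this, hsplit, (qdiv_aux (lt_of_le_of_lt (degree_C_le) hdq)).1]
    exact ih M' (fun k => e (k + 1)) (by omega)

private lemma natDegree_geomsum_aux {q : Polynomial K} (hq : 0 < q.natDegree) {n : ℕ}
    (hn : 0 < n) {N : ℕ} (d : ℕ → K) {i : ℕ} (hiN : i ≤ N) (hdi : d i ≠ 0) :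
    n * i ≤ (∑ k ∈ Finset.range (N + 1), Polynomial.C (d k) * q ^ (n * k)).natDegree := by
  classical
  have hq0 : q ≠ 0 := fun h => by simp [h] at hq
  set p := ∑ k ∈ Finset.range (N + 1), Polynomial.C (d k) * q ^ (n * k) with hp
  set S := (Finset.range (N + 1)).filter (fun k => d k ≠ 0) with hS
  have hiS : i ∈ S := by
    rw [hS]
    exact Finset.mem_filter.mpr ⟨Finset.mem_range.mpr (by omega), hdi⟩
  have hSne : S.Nonempty := ⟨i, hiS⟩
  set m := S.max' hSne with hm
  have hmS : m ∈ S := S.max'_mem hSne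
  have hdm : d m ≠ 0 := (Finset.mem_filter.mp hmS).2
  have him : i ≤ m := S.le_max' i hiS
  have hpS : p = ∑ k ∈ S, Polynomial.C (d k) * q ^ (n * k) := by
    rw [hp, hS]
    refine (Finset.sum_filter_of_ne fun k _ hk => ?_).symm
    intro hdk
    exact hk (by rw [hdk]; simp)
  have hterm : ∀ k, d k ≠ 0 →
      (Polynomial.C (d k) * q ^ (n * k)).degree = ((n * k * q.natDegree : ℕ) : WithBot ℕ) := by
    intro k hk
    rw [degree_mul, degree_C hk, zero_add, degree_pow, degree_eq_natDegree hq0]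
    simp [mul_comm, mul_assoc, mul_left_comm]
  have hrest : (∑ k ∈ S.erase m, Polynomial.C (d k) * q ^ (n * k)).degree
      < ((n * m * q.natDegree : ℕ) : WithBot ℕ) := by
    refine lt_of_le_of_lt (degree_sum_le _ _) ?_
    rw [Finset.sup_lt_iff (by exact WithBot.bot_lt_coe _)]
    intro k hk
    have hkS : k ∈ S := Finset.mem_of_mem_erase hk
    have hkm : k < m := lt_of_le_of_ne (S.le_max' k hkS) (Finset.ne_of_mem_erase hk)
    have hdk : d k ≠ 0 := (Finset.mem_filter.mp hkS).2
    rw [hterm k hdk]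
    exact_mod_cast Nat.mul_lt_mul_of_pos_right ((Nat.mul_lt_mul_left hn).mpr hkm) hq
  have hpsum : p = Polynomial.C (d m) * q ^ (n * m)
      + ∑ k ∈ S.erase m, Polynomial.C (d k) * q ^ (n * k) := by
    rw [hpS, ← Finset.add_sum_erase _ _ hmS]
  have hpdeg : p.degree = ((n * m * q.natDegree : ℕ) : WithBot ℕ) := by
    rw [hpsum, degree_add_eq_left_of_degree_lt (by rw [hterm m hdm]; exact hrest),
      hterm m hdm]
  have : p.natDegree = n * m * q.natDegree := natDegree_eq_of_degree_eq_some hpdeg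
  rw [this]
  calc n * i ≤ n * m := Nat.mul_le_mul_left n him
    _ ≤ n * m * q.natDegree := Nat.le_mul_of_pos_right _ hq

end AuxLemmas

/-- Suppose `ν = ν_q` and `ν(q)` is torsion over `νK`, i.e. there are
`a ∈ K^×` and `n ≥ 1` with `w(qⁿ/a) = 0`. Then the residue `(qⁿ/a)ν` is transcendental
over `Kν`; in particular `ν` is residue-transcendental. -/
theorem residueTranscendental_of_trunc_eq_of_torsion {K : Type*} [Field K] {Γ : Type*}
    [AddCommGroup Γ] [LinearOrder Γ] [IsOrderedAddMonoid Γ]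
    (ν : AddValuation (Polynomial K) (WithTop Γ)) (w : AddValuation (RatFunc K) (WithTop Γ))
    (hν : TrivialSupport ν) (hw : ExtendsToRatFunc w ν)
    (q : Polynomial K) (hq : 0 < q.natDegree) (htr : ∀ p : Polynomial K, ν p = trunc ν q p)
    (a : K) (ha : a ≠ 0) (n : ℕ) (hn : 0 < n)
    (hval : w (algebraMap (Polynomial K) (RatFunc K) (q ^ n) / algebraMap K (RatFunc K) a) = 0) :
    ResidueTranscendentalElem w
        (algebraMap (Polynomial K) (RatFunc K) (q ^ n) / algebraMap K (RatFunc K) a) ∧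
      IsResidueTranscendental w := by
  classical
  set F := algebraMap (Polynomial K) (RatFunc K) with hF
  set G := algebraMap K (RatFunc K) with hG
  have hGF : ∀ x : K, G x = F (Polynomial.C x) := fun x => by
    rw [hG, hF, RatFunc.algebraMap_eq_C, ← RatFunc.algebraMap_C]
  have hq0 : q ≠ 0 := fun h => by simp [h] at hq
  have hνq_ne : ν q ≠ ⊤ := fun h => hq0 (hν q h)
  have hCa0 : (Polynomial.C a : Polynomial K) ≠ 0 := by simpa using ha
  have hνa_ne : ν (Polynomial.C a) ≠ ⊤ := fun h => hCa0 (hν _ h)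
  have hGa0 : G a ≠ 0 := by simpa [hG] using ha
  have hqa : n • ν q = ν (Polynomial.C a) := by
    have h1 : F (q ^ n) = F (q ^ n) / G a * G a := (div_mul_cancel₀ _ hGa0).symm
    have h2 : ν (q ^ n) = ν (Polynomial.C a) := by
      rw [← hw, h1, AddValuation.map_mul, hval, zero_add, hGF, hw]
    rw [← h2, AddValuation.map_pow]
  have key : ResidueTranscendentalElem w (F (q ^ n) / G a) := by
    intro N c hcnn hc0
    obtain ⟨i₀, hi₀N, hi₀⟩ := hc0
    set g := F (q ^ n) / G a with hg
    have hwg : w g = 0 := hval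
    set d : ℕ → K := fun i => c i * a ^ (N - i) with hd
    set p : Polynomial K := ∑ i ∈ Finset.range (N + 1), Polynomial.C (d i) * q ^ (n * i)
      with hp
    set S := ∑ i ∈ Finset.range (N + 1), G (c i) * g ^ i with hS
    have hid : F p = S * G a ^ N := by
      rw [hp, hS, map_sum, Finset.sum_mul]
      refine Finset.sum_congr rfl fun i hi => ?_
      have hiN : i ≤ N := Nat.lt_succ_iff.mp (Finset.mem_range.mp hi)
      have e1 : Polynomial.C (d i) * q ^ (n * i)
          = Polynomial.C (c i) * Polynomial.C a ^ (N - i) * (q ^ n) ^ i := by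
        rw [hd, map_mul, map_pow, pow_mul]
      have hsplit : (G a) ^ N = (G a) ^ i * (G a) ^ (N - i) := by
        rw [← pow_add]
        congr 1
        omega
      rw [e1, map_mul, map_mul, map_pow, map_pow, ← hGF, ← hGF, hg, hsplit, div_pow]
      have hGai : (G a) ^ i ≠ 0 := pow_ne_zero _ hGa0
      field_simp
    have hci₀ : ν (Polynomial.C (c i₀)) = 0 := by rw [← hw, ← hGF]; exact hi₀
    have hc0' : c i₀ ≠ 0 := by
      intro h
      rw [h, map_zero, AddValuation.map_zero] at hci₀
      simp at hci₀
    have hd0 : d i₀ ≠ 0 := mul_ne_zero hc0' (pow_ne_zero _ ha)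
    have hmem : n * i₀ ∈ Finset.range (p.natDegree + 1) :=
      Finset.mem_range.mpr (Nat.lt_succ_of_le (natDegree_geomsum_aux hq hn d hi₀N hd0))
    set e : ℕ → K := fun k => if n ∣ k then d (k / n) else 0 with he
    have hpe : p = ∑ k ∈ Finset.range (n * N + 1), Polynomial.C (e k) * q ^ k := by
      rw [hp]
      have hek : ∀ k, Polynomial.C (e k) * q ^ k
          = if n ∣ k then Polynomial.C (d (k / n)) * q ^ k else 0 := by
        intro k
        rw [he]
        split <;> simp_all
      rw [Finset.sum_congr rfl fun k _ => hek k, ← Finset.sum_filter]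
      refine Finset.sum_nbij' (fun i => n * i) (fun k => k / n) ?_ ?_ ?_ ?_ ?_
      · intro i hi
        have hiN : i ≤ N := Nat.lt_succ_iff.mp (Finset.mem_range.mp hi)
        have h1 : n * i ≤ n * N := Nat.mul_le_mul_left n hiN
        exact Finset.mem_filter.mpr ⟨Finset.mem_range.mpr (by omega), Dvd.intro i rfl⟩
      · intro k hk
        obtain ⟨hkr, ⟨t, rfl⟩⟩ := Finset.mem_filter.mp hk
        have hkM : n * t < n * N + 1 := Finset.mem_range.mp hkr
        have htN : t ≤ N := Nat.le_of_mul_le_mul_left (by omega) hn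
        rw [Nat.mul_div_cancel_left t hn]
        exact Finset.mem_range.mpr (by omega)
      · intro i _
        exact Nat.mul_div_cancel_left i hn
      · intro k hk
        obtain ⟨_, hdvd⟩ := Finset.mem_filter.mp hk
        exact Nat.mul_div_cancel' hdvd
      · intro i _
        rw [Nat.mul_div_cancel_left i hn]
    have hqc : qCoeff q (n * i₀) p = Polynomial.C (d i₀) := by
      have hlt : n * i₀ < n * N + 1 := by
        have : n * i₀ ≤ n * N := Nat.mul_le_mul_left n hi₀N
        omega
      rw [hpe, qCoeff_sum_aux hq (n * i₀) (n * N + 1) e hlt, he]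
      simp only [Nat.mul_div_cancel_left i₀ hn, if_pos (Dvd.intro i₀ rfl)]
    have hterm : ν (qCoeff q (n * i₀) p * q ^ (n * i₀)) = N • ν (Polynomial.C a) := by
      rw [hqc, AddValuation.map_mul, AddValuation.map_pow]
      have e2 : (Polynomial.C (d i₀) : Polynomial K)
          = Polynomial.C (c i₀) * Polynomial.C a ^ (N - i₀) := by
        rw [hd, map_mul, map_pow]
      rw [e2, AddValuation.map_mul, AddValuation.map_pow, hci₀, zero_add]
      have e3 : (n * i₀) • ν q = i₀ • ν (Polynomial.C a) := by
        rw [mul_comm, mul_smul, hqa]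
      rw [e3, ← add_nsmul]
      congr 1
      omega
    have htrle : ν p ≤ N • ν (Polynomial.C a) := by
      rw [htr p]
      exact le_trans (Finset.inf_le hmem) (le_of_eq hterm)
    have hνp : ν p = w S + N • ν (Polynomial.C a) := by
      rw [← hw p, hid, AddValuation.map_mul, AddValuation.map_pow, hGF, hw]
    have hSnn : (0 : WithTop Γ) ≤ w S := by
      rw [hS]
      refine AddValuation.map_le_sum w fun i hi => ?_
      rw [AddValuation.map_mul, AddValuation.map_pow, hwg, smul_zero, add_zero]
      exact hcnn i (Nat.lt_succ_iff.mp (Finset.mem_range.mp hi))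
    have hNtop : N • ν (Polynomial.C a) ≠ ⊤ := by
      obtain ⟨y, hy⟩ := WithTop.ne_top_iff_exists.mp hνa_ne
      rw [← hy, ← WithTop.coe_nsmul]
      exact WithTop.coe_ne_top
    rcases eq_or_lt_of_le hSnn with h | h
    · exact h.symm
    · exfalso
      have hlt : N • ν (Polynomial.C a) < ν p := by
        rw [hνp]
        calc N • ν (Polynomial.C a) = 0 + N • ν (Polynomial.C a) := (zero_add _).symm
          _ < w S + N • ν (Polynomial.C a) := WithTop.add_lt_add_right hNtop h
      exact absurd htrle (not_le.mpr hlt)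
  exact ⟨key, ⟨F (q ^ n) / G a, hval, key⟩⟩
end

section
/- Let K be a field and ν a valuation on K[x] with trivial support, extended to K(x). Suppose ν is value-transcendental and let q ∈ K[x] be a polynomial of smallest degree such that ν(q) is torsion-free over νK (i.e., nν(q) ∉ νK for all n ≥ 1). Then ν = ν_q. -/
open Polynomial

section AuxStatement7

variable {K : Type*} [Field K] {Γ : Type*} [AddCommGroup Γ] [LinearOrder Γ] [IsOrderedAddMonoid Γ]

private lemma myAux_neg7 (ν : AddValuation (Polynomial K) (WithTop Γ)) (x : Polynomial K) :
    ν (-x) = ν x := by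
  have h1 : ν (-1 : Polynomial K) = 0 := by
    have h := ν.map_mul (-1 : Polynomial K) (-1)
    rw [neg_mul, one_mul, neg_neg, ν.map_one] at h
    by_cases hh : ν (-1 : Polynomial K) = ⊤
    · rw [hh, top_add] at h
      exact absurd h.symm (by simp)
    · obtain ⟨a, hh⟩ := WithTop.ne_top_iff_exists.mp hh
      rw [← hh] at h
      have h2 : a + a = (0 : Γ) := by exact_mod_cast h
      have h3 : a = 0 := by
        rcases lt_trichotomy a 0 with hl | hl | hl
        · have h4 := add_lt_add hl hl
          rw [add_zero] at h4
          exact absurd h2 h4.ne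
        · exact hl
        · have h4 := add_lt_add hl hl
          rw [add_zero] at h4
          exact absurd h2 h4.ne'
      rw [← hh, h3]
      rfl
  have h := ν.map_mul (-1 : Polynomial K) x
  rwa [neg_mul, one_mul, h1, zero_add] at h

private lemma myAux_add_lt7 (ν : AddValuation (Polynomial K) (WithTop Γ)) {x y : Polynomial K}
    (h : ν x < ν y) : ν (x + y) = ν x := by
  refine le_antisymm ?_ (by simpa [min_eq_left h.le] using ν.map_add x y)
  by_contra hc
  push_neg at hc
  have h2 : ν x = ν ((x + y) + (-y)) := by rw [add_neg_cancel_right]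
  have h3 : min (ν (x + y)) (ν (-y)) ≤ ν x := h2 ▸ ν.map_add (x + y) (-y)
  rw [myAux_neg7] at h3
  rcases min_le_iff.mp h3 with h4 | h4
  · exact absurd h4 (not_le.mpr hc)
  · exact absurd h4 (not_le.mpr h)

private lemma myAux_add_ne7 (ν : AddValuation (Polynomial K) (WithTop Γ)) {x y : Polynomial K}
    (h : ν x ≠ ν y) : ν (x + y) = min (ν x) (ν y) := by
  rcases h.lt_or_gt with hl | hl
  · rw [myAux_add_lt7 ν hl, min_eq_left hl.le]
  · rw [add_comm, myAux_add_lt7 ν hl, min_eq_right hl.le]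

private lemma myAux_sum7 (ν : AddValuation (Polynomial K) (WithTop Γ)) {ι : Type*}
    (s : Finset ι) (f : ι → Polynomial K)
    (hd : ∀ i ∈ s, ∀ j ∈ s, i ≠ j → ν (f i) ≠ ⊤ → ν (f j) ≠ ⊤ → ν (f i) ≠ ν (f j)) :
    ν (∑ i ∈ s, f i) = s.inf fun i => ν (f i) := by
  classical
  induction s using Finset.induction_on with
  | empty => simp [ν.map_zero]
  | @insert a s ha ih =>
    have hs : ν (∑ i ∈ s, f i) = s.inf fun i => ν (f i) :=
      ih fun i hi j hj => hd i (Finset.mem_insert_of_mem hi) j (Finset.mem_insert_of_mem hj)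
    rw [Finset.sum_insert ha, Finset.inf_insert]
    by_cases hne : ν (f a) = ν (∑ i ∈ s, f i)
    · by_cases htop : ν (f a) = ⊤
      · have hstop : ν (∑ i ∈ s, f i) = ⊤ := hne ▸ htop
        have hle : (⊤ : WithTop Γ) ≤ ν (f a + ∑ i ∈ s, f i) := by
          have := ν.map_add (f a) (∑ i ∈ s, f i)
          rwa [htop, hstop, min_self] at this
        rw [top_le_iff.mp hle, htop, ← hs, hstop]
        simp
      · have hstop : ν (∑ i ∈ s, f i) ≠ ⊤ := hne ▸ htop
        have hsne : s.Nonempty := by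
          rcases Finset.eq_empty_or_nonempty s with rfl | hh
          · rw [hs] at hstop; simp at hstop
          · exact hh
        obtain ⟨i, hi, hieq⟩ := Finset.exists_mem_eq_inf s hsne fun i => ν (f i)
        have heq : ν (f a) = ν (f i) := by rw [hne, hs, hieq]
        have hia : a ≠ i := fun hh => ha (hh ▸ hi)
        exact absurd heq (hd a (Finset.mem_insert_self a s) i (Finset.mem_insert_of_mem hi)
          hia htop (heq ▸ htop))
    · rw [myAux_add_ne7 ν hne, hs]

private lemma myAux_qCoeff_deg7 {q : Polynomial K} (hq : q.natDegree ≠ 0) :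
    ∀ (i : ℕ) (p : Polynomial K), (qCoeff q i p).natDegree < q.natDegree := by
  intro i
  induction i with
  | zero => intro p; exact Polynomial.natDegree_mod_lt p hq
  | succ n ih => intro p; exact ih (p / q)

private lemma myAux_expansion7 {q : Polynomial K} (hq : q.natDegree ≠ 0) :
    ∀ (N : ℕ) (p : Polynomial K), p.natDegree < (N + 1) * q.natDegree →
      ∑ i ∈ Finset.range (N + 1), qCoeff q i p * q ^ i = p := by
  have hq0 : q ≠ 0 := fun h => hq (by rw [h]; simp)
  intro N
  induction N with
  | zero =>
    intro p hp
    have hp' : p.degree < q.degree := Polynomial.degree_lt_degree (by simpa using hp)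
    simp only [zero_add, Finset.range_one, Finset.sum_singleton, pow_zero, mul_one]
    show p % q = p
    exact (Polynomial.mod_eq_self_iff hq0).mpr hp'
  | succ N ih =>
    intro p hp
    rw [Finset.sum_range_succ']
    have h1 : ∀ i : ℕ, qCoeff q (i + 1) p = qCoeff q i (p / q) := fun i => rfl
    have key : ∑ i ∈ Finset.range (N + 1), qCoeff q (i + 1) p * q ^ (i + 1)
        = (∑ i ∈ Finset.range (N + 1), qCoeff q i (p / q) * q ^ i) * q := by
      rw [Finset.sum_mul]
      exact Finset.sum_congr rfl fun i _ => by rw [h1, pow_succ, mul_assoc]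
    have hdiv : (p / q).natDegree < (N + 1) * q.natDegree := by
      by_cases hpq : p / q = 0
      · rw [hpq, Polynomial.natDegree_zero]
        exact Nat.mul_pos (Nat.succ_pos N) (Nat.pos_of_ne_zero hq)
      · have hid : q * (p / q) = p - p % q :=
          eq_sub_of_add_eq (EuclideanDomain.div_add_mod p q)
        have hmul : (q * (p / q)).natDegree = q.natDegree + (p / q).natDegree :=
          Polynomial.natDegree_mul hq0 hpq
        have hsub : (p - p % q).natDegree ≤ max p.natDegree (p % q).natDegree :=
          Polynomial.natDegree_sub_le p (p % q)
        have hmod : (p % q).natDegree < q.natDegree := Polynomial.natDegree_mod_lt p hq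
        have hle : q.natDegree + (p / q).natDegree ≤ max p.natDegree (p % q).natDegree := by
          rw [← hmul, hid]; exact hsub
        rcases le_max_iff.mp hle with h2 | h2
        · have h3 : (p / q).natDegree + q.natDegree < (N + 1) * q.natDegree + q.natDegree := by
            calc (p / q).natDegree + q.natDegree = q.natDegree + (p / q).natDegree := by omega
              _ ≤ p.natDegree := h2
              _ < (N + 1 + 1) * q.natDegree := hp
              _ = (N + 1) * q.natDegree + q.natDegree := by ring
          exact Nat.lt_of_add_lt_add_right h3
        · exact absurd (lt_of_le_of_lt h2 hmod) (Nat.not_lt.mpr (Nat.le_add_right _ _))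
    rw [key, ih (p / q) hdiv]
    show p / q * q + p % q * 1 = p
    rw [mul_one, mul_comm]
    exact EuclideanDomain.div_add_mod p q

end AuxStatement7

/-- Suppose `ν` is value-transcendental and `q ∈ K[x]` is a polynomial of
smallest degree such that `ν(q)` is torsion-free over `νK` (i.e. `n·ν(q) ∉ νK` for all
`n ≥ 1`). Then `ν = ν_q`. -/
theorem trunc_eq_of_valueTranscendental {K : Type*} [Field K] {Γ : Type*}
    [AddCommGroup Γ] [LinearOrder Γ] [IsOrderedAddMonoid Γ]
    (ν : AddValuation (Polynomial K) (WithTop Γ)) (w : AddValuation (RatFunc K) (WithTop Γ))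
    (hν : TrivialSupport ν) (hw : ExtendsToRatFunc w ν)
    (hvt : IsValueTranscendental w)
    (q : Polynomial K) (hq0 : q ≠ 0)
    (htf : ∀ n : ℕ, 0 < n → ∀ c : K, c ≠ 0 → ν (q ^ n) ≠ ν (C c))
    (hmin : ∀ p : Polynomial K, p ≠ 0 →
      (∀ n : ℕ, 0 < n → ∀ c : K, c ≠ 0 → ν (p ^ n) ≠ ν (C c)) → q.natDegree ≤ p.natDegree) :
    ∀ p : Polynomial K, ν p = trunc ν q p := by
  classical
  have hqd : q.natDegree ≠ 0 := by
    intro h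
    have hc : q.coeff 0 ≠ 0 := by
      intro h0
      exact hq0 (by rw [Polynomial.eq_C_of_natDegree_eq_zero h, h0, map_zero])
    exact htf 1 one_pos (q.coeff 0) hc
      (by rw [pow_one]; exact congrArg ν (Polynomial.eq_C_of_natDegree_eq_zero h))
  have hfin : ∀ f : Polynomial K, f ≠ 0 → ∃ g : Γ, ν f = (g : WithTop Γ) := by
    intro f hf
    rcases h : ν f with _ | g
    · exact absurd (hν f h) hf
    · exact ⟨g, rfl⟩
  obtain ⟨Q, hQ⟩ := hfin q hq0
  have hdist : ∀ a b : Polynomial K, a ≠ 0 → b ≠ 0 → a.natDegree < q.natDegree →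
      b.natDegree < q.natDegree → ∀ i j : ℕ, i < j → ν (a * q ^ i) ≠ ν (b * q ^ j) := by
    intro a b ha hb hda hdb i j hij heq
    have torsion : ∀ f : Polynomial K, f ≠ 0 → f.natDegree < q.natDegree →
        ∃ n : ℕ, 0 < n ∧ ∃ c : K, c ≠ 0 ∧ ν (f ^ n) = ν (C c) := by
      intro f hf hdf
      by_contra hcon
      push_neg at hcon
      exact absurd (hmin f hf fun n hn c hc => hcon n hn c hc) (not_le.mpr hdf)
    obtain ⟨m₁, hm₁, c₁, hc₁, he₁⟩ := torsion a ha hda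
    obtain ⟨m₂, hm₂, c₂, hc₂, he₂⟩ := torsion b hb hdb
    obtain ⟨A, hA⟩ := hfin a ha
    obtain ⟨B, hB⟩ := hfin b hb
    obtain ⟨C₁, hC₁⟩ := hfin (C c₁) (Polynomial.C_ne_zero.mpr hc₁)
    obtain ⟨C₂, hC₂⟩ := hfin (C c₂) (Polynomial.C_ne_zero.mpr hc₂)
    have e1 : A + i • Q = B + j • Q := by
      have h := heq
      rw [ν.map_mul, ν.map_mul, ν.map_pow, ν.map_pow, hA, hB, hQ,
        ← WithTop.coe_nsmul, ← WithTop.coe_nsmul, ← WithTop.coe_add, ← WithTop.coe_add] at h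
      exact_mod_cast h
    have e2 : m₁ • A = C₁ := by
      have h := he₁
      rw [ν.map_pow, hA, hC₁, ← WithTop.coe_nsmul] at h
      exact_mod_cast h
    have e3 : m₂ • B = C₂ := by
      have h := he₂
      rw [ν.map_pow, hB, hC₂, ← WithTop.coe_nsmul] at h
      exact_mod_cast h
    have hAB : A = B + (j - i) • Q := by
      have hj : j • Q = (j - i) • Q + i • Q := by
        rw [← add_nsmul]
        congr 1
        omega
      rw [hj, ← add_assoc] at e1
      exact add_right_cancel e1
    set n : ℕ := m₁ * m₂ * (j - i) with hn
    have hnpos : 0 < n := Nat.mul_pos (Nat.mul_pos hm₁ hm₂) (by omega)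
    set c : K := c₁ ^ m₂ * (c₂ ^ m₁)⁻¹ with hc
    have hcne : c ≠ 0 := mul_ne_zero (pow_ne_zero _ hc₁) (inv_ne_zero (pow_ne_zero _ hc₂))
    obtain ⟨D, hD⟩ := hfin (C ((c₂ ^ m₁)⁻¹))
      (Polynomial.C_ne_zero.mpr (inv_ne_zero (pow_ne_zero _ hc₂)))
    have hDval : D = -(m₁ • C₂) := by
      have h0 : ν (C (c₂ ^ m₁) * C ((c₂ ^ m₁)⁻¹)) = 0 := by
        rw [← Polynomial.C_mul, mul_inv_cancel₀ (pow_ne_zero _ hc₂), Polynomial.C_1, ν.map_one]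
      rw [ν.map_mul, hD, map_pow, ν.map_pow, hC₂, ← WithTop.coe_nsmul, ← WithTop.coe_add] at h0
      have h1 : (m₁ • C₂ : Γ) + D = 0 := by exact_mod_cast h0
      exact eq_neg_of_add_eq_zero_right h1
    have key : n • Q = m₂ • C₁ + D :=
      calc n • Q = (m₁ * m₂) • ((j - i) • Q) := by rw [smul_smul, ← hn]
        _ = (m₁ * m₂) • (A - B) := by rw [hAB, add_sub_cancel_left]
        _ = (m₁ * m₂) • A - (m₁ * m₂) • B := smul_sub _ _ _
        _ = m₂ • (m₁ • A) - m₁ • (m₂ • B) := by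
              rw [smul_smul, smul_smul, Nat.mul_comm m₂ m₁]
        _ = m₂ • C₁ - m₁ • C₂ := by rw [e2, e3]
        _ = m₂ • C₁ + D := by rw [hDval, sub_eq_add_neg]
    refine htf n hnpos c hcne ?_
    have hl : ν (q ^ n) = ((n • Q : Γ) : WithTop Γ) := by
      rw [ν.map_pow, hQ, ← WithTop.coe_nsmul]
    have hr : ν (C c) = ((m₂ • C₁ + D : Γ) : WithTop Γ) := by
      have hcc : (C c : Polynomial K) = C (c₁ ^ m₂) * C ((c₂ ^ m₁)⁻¹) := by
        rw [← Polynomial.C_mul]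
      rw [hcc, ν.map_mul, hD, map_pow, ν.map_pow, hC₁, ← WithTop.coe_nsmul, ← WithTop.coe_add]
    rw [hl, hr, key]
  intro p
  rcases eq_or_ne p 0 with rfl | hp0
  · have h0 : qCoeff q 0 (0 : Polynomial K) = 0 := by
      show (0 : Polynomial K) % q = 0
      simp
    simp [trunc, h0, ν.map_zero]
  · have hq1 : 1 ≤ q.natDegree := Nat.one_le_iff_ne_zero.mpr hqd
    have hexp := myAux_expansion7 hqd p.natDegree p
      (calc p.natDegree < p.natDegree + 1 := Nat.lt_succ_self _
        _ = (p.natDegree + 1) * 1 := (mul_one _).symm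
        _ ≤ (p.natDegree + 1) * q.natDegree := Nat.mul_le_mul_left _ hq1)
    show ν p = (Finset.range (p.natDegree + 1)).inf fun i => ν (qCoeff q i p * q ^ i)
    conv_lhs => rw [← hexp]
    refine myAux_sum7 ν _ _ ?_
    intro i hi j hj hij hti htj
    have hi0 : qCoeff q i p ≠ 0 := by
      intro h
      exact hti (by rw [h, zero_mul]; exact ν.map_zero)
    have hj0 : qCoeff q j p ≠ 0 := by
      intro h
      exact htj (by rw [h, zero_mul]; exact ν.map_zero)
    rcases hij.lt_or_gt with h | h
    · exact hdist _ _ hi0 hj0 (myAux_qCoeff_deg7 hqd i p) (myAux_qCoeff_deg7 hqd j p) i j h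
    · exact (hdist _ _ hj0 hi0 (myAux_qCoeff_deg7 hqd j p) (myAux_qCoeff_deg7 hqd i p) j i h).symm
end

section
/- Let K be a field, ν a valuation on K[x] with trivial support, K̄ an algebraic closure of K, and μ an extension of ν to K̄[x]. Let f ∈ K[x] be monic with roots a_1, …, a_n ∈ K̄ (with multiplicity), let I(f) = {i : μ(x−a_i) = δ(f)} and r = |I(f)|. Then ν(∂_r f) = Σ_{i ∉ I(f)} μ(x−a_i), and consequently ν(f) − ν(∂_r f) = r·δ(f). -/
open Polynomial

section AuxLemmas

lemma myHasseDeriv_map {R S : Type*} [CommSemiring R] [CommSemiring S] (φ : R →+* S) (k : ℕ)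
    (p : R[X]) : (p.hasseDeriv k).map φ = (p.map φ).hasseDeriv k := by
  ext n
  simp [hasseDeriv_coeff, coeff_map]

lemma myAddValuation_prod {R : Type*} [CommRing R] {Γ₀ : Type*}
    [LinearOrderedAddCommMonoidWithTop Γ₀] (v : AddValuation R Γ₀) {ι : Type*} (s : Finset ι)
    (g : ι → R) : v (∏ i ∈ s, g i) = ∑ i ∈ s, v (g i) := by
  classical
  induction s using Finset.induction with
  | empty => simpa using v.map_one
  | insert _ _ h ih => rw [Finset.prod_insert h, Finset.sum_insert h, v.map_mul, ih]

lemma myAddValuation_sum_eq {R : Type*} [CommRing R] {Γ₀ : Type*}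
    [LinearOrderedAddCommGroupWithTop Γ₀] (v : AddValuation R Γ₀) {ι : Type*} {s : Finset ι}
    {g : ι → R} {i0 : ι} (h0 : i0 ∈ s) (hne : v (g i0) ≠ ⊤)
    (h : ∀ i ∈ s, i ≠ i0 → v (g i0) < v (g i)) :
    v (∑ i ∈ s, g i) = v (g i0) := by
  classical
  rw [← Finset.add_sum_erase _ _ h0]
  refine v.map_add_eq_of_lt_left ?_
  refine v.map_lt_sum hne ?_
  intro i hi
  exact h i (Finset.mem_of_mem_erase hi) (Finset.ne_of_mem_erase hi)

lemma myHasseDeriv_linear_mul {R : Type*} [CommRing R] [Nontrivial R] (c : R) (p : R[X]) (m : ℕ) :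
    hasseDeriv (m + 1) ((X - C c) * p) =
      (X - C c) * hasseDeriv (m + 1) p + hasseDeriv m p := by
  rw [hasseDeriv_mul, Finset.Nat.sum_antidiagonal_eq_sum_range_succ_mk]
  rw [← Finset.sum_subset (s₁ := Finset.range 2)
      (Finset.range_subset_range.2 (by omega)) ?_]
  · rw [Finset.sum_range_succ, Finset.sum_range_one]
    simp [hasseDeriv_one']
  · intro i hi hi2
    have h2 : 2 ≤ i := by simp at hi2; omega
    have : hasseDeriv i (X - C c) = 0 := by
      apply hasseDeriv_eq_zero_of_lt_natDegree
      rw [natDegree_X_sub_C]; omega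
    simp [this]


lemma myHasseDeriv_prod {R : Type*} [CommRing R] [Nontrivial R] {ι : Type*} [DecidableEq ι]
    (a : ι → R) (s : Finset ι) (r : ℕ) :
    hasseDeriv r (∏ i ∈ s, (X - C (a i))) =
      ∑ T ∈ s.powersetCard r, ∏ i ∈ s \ T, (X - C (a i)) := by
  induction s using Finset.induction generalizing r with
  | empty =>
    match r with
    | 0 => simp
    | m + 1 => simp [hasseDeriv_apply_one]
  | @insert j s hj ih =>
    match r with
    | 0 => simp
    | m + 1 =>
      rw [Finset.prod_insert hj, myHasseDeriv_linear_mul, ih, ih,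
        Finset.powersetCard_succ_insert hj, Finset.sum_union, Finset.mul_sum,
        Finset.sum_image]
      · congr 1
        · refine Finset.sum_congr rfl fun T hT => ?_
          have hTs : T ⊆ s := (Finset.mem_powersetCard.1 hT).1
          have hjT : j ∉ T := fun h => hj (hTs h)
          rw [Finset.insert_sdiff_of_notMem _ hjT, Finset.prod_insert]
          simp [hj, Finset.mem_sdiff]
        · refine Finset.sum_congr rfl fun T hT => ?_
          have hTs : T ⊆ s := (Finset.mem_powersetCard.1 hT).1
          congr 1
          ext x
          simp only [Finset.mem_sdiff, Finset.mem_insert]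
          by_cases hxj : x = j
          · subst hxj; simp [hj]
          · simp [hxj]
      · intro T hT U hU h
        have hjT : j ∉ T := fun hh => hj ((Finset.mem_powersetCard.1 hT).1 hh)
        have hjU : j ∉ U := fun hh => hj ((Finset.mem_powersetCard.1 hU).1 hh)

        have := congrArg (Finset.erase · j) h
        simpa [Finset.erase_insert, hjT, hjU] using this
      · rw [Finset.disjoint_left]
        intro T hT hT'
        have hjT : j ∉ T := fun hh => hj ((Finset.mem_powersetCard.1 hT).1 hh)
        obtain ⟨U, hU, rfl⟩ := Finset.mem_image.1 hT'
        exact hjT (Finset.mem_insert_self _ _)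

lemma myWithTop_coe_sum {Γ : Type*} [AddCommMonoid Γ] {ι : Type*} (s : Finset ι) (g : ι → Γ) :
    ((∑ i ∈ s, g i : Γ) : WithTop Γ) = ∑ i ∈ s, ((g i : WithTop Γ)) := by
  classical
  induction s using Finset.induction with
  | empty => simp
  | insert _ _ h ih => rw [Finset.sum_insert h, Finset.sum_insert h, WithTop.coe_add, ih]


end AuxLemmas

/-- Let `f ∈ K[x]` be monic with roots `a_1, …, a_n ∈ K̄` (with
multiplicity), let `I = {i : μ(x - a_i) = δ(f)}` and `r = |I|`. Then
`ν(∂_r f) = Σ_{i ∉ I} μ(x - a_i)` and `ν(f) - ν(∂_r f) = r·δ(f)`. -/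
theorem hasseDeriv_value_at_card_max_roots {K : Type*} [Field K] {Γ : Type*}
    [AddCommGroup Γ] [LinearOrder Γ] [IsOrderedAddMonoid Γ]
    {L : Type*} [Field L] [Algebra K L] [IsAlgClosure K L]
    (ν : AddValuation (Polynomial K) (WithTop Γ)) (μ : AddValuation (Polynomial L) (WithTop Γ))
    (hν : TrivialSupport ν) (hμ : TrivialSupport μ) (hext : IsExtension μ ν)
    (f : Polynomial K) (hf : f.Monic) (hdeg : 0 < f.natDegree)
    (n : ℕ) (a : Fin n → L)
    (hfact : f.map (algebraMap K L) = ∏ i, (X - C (a i)))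
    (I : Finset (Fin n)) (hI : ∀ i, i ∈ I ↔ aval μ (X - C (a i)) = delta μ f) :
    aval ν (f.hasseDeriv I.card) = ∑ i ∈ Iᶜ, aval μ (X - C (a i)) ∧
      aval ν f - aval ν (f.hasseDeriv I.card) = I.card • delta μ f := by
  letI := Classical.decEq L
  set φ := algebraMap K L
  set v : Fin n → Γ := fun i => aval μ (X - C (a i)) with hvdef
  have hv : ∀ i, μ (X - C (a i)) = ((v i : Γ) : WithTop Γ) := by
    intro i
    have hne : μ (X - C (a i)) ≠ ⊤ := fun h => X_sub_C_ne_zero (a i) (hμ _ h)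
    obtain ⟨γ, hγ⟩ := WithTop.ne_top_iff_exists.1 hne
    rw [← hγ]
    simp [hvdef, aval, ← hγ]
  -- n is positive
  have hdegF : (f.map φ).natDegree = n := by
    rw [hfact, natDegree_prod_of_monic _ _ fun i _ => monic_X_sub_C (a i)]
    simp
  have hn : 0 < n := by
    rw [← hdegF, natDegree_map_eq_of_injective (algebraMap K L).injective]
    exact hdeg
  haveI : Nonempty (Fin n) := Fin.pos_iff_nonempty.1 hn
  -- roots and delta
  have hroots : (f.map φ).roots = Multiset.map a Finset.univ.val := by
    rw [hfact]
    have : (∏ i, (X - C (a i))) = ((Multiset.map a Finset.univ.val).map fun b => X - C b).prod := by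
      rw [Multiset.map_map]; rfl
    rw [this, roots_multiset_prod_X_sub_C]
  have htf : ((f.map φ).roots.toFinset) = Finset.univ.image a := by
    rw [hroots, Multiset.toFinset_map]
    simp
  have hne2 : ((f.map φ).roots.toFinset).Nonempty := by
    rw [htf]; exact Finset.univ_nonempty.image a
  set δ : Γ := delta μ f with hδdef
  have hdelta : δ = Finset.univ.sup' Finset.univ_nonempty v := by
    rw [hδdef]
    unfold delta
    rw [dif_pos hne2, Finset.sup'_congr hne2 htf fun x _ => rfl, Finset.sup'_image]
    rfl
  -- value of a product of linear factors
  have hval : ∀ T : Finset (Fin n), μ (∏ i ∈ Finset.univ \ T, (X - C (a i)))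
      = ((∑ i ∈ Finset.univ \ T, v i : Γ) : WithTop Γ) := by
    intro T
    rw [myAddValuation_prod, myWithTop_coe_sum]
    exact Finset.sum_congr rfl fun i _ => hv i
  -- comparison of sums
  have hvle : ∀ i : Fin n, v i ≤ δ := by
    intro i
    rw [hdelta]
    exact Finset.le_sup' v (Finset.mem_univ i)
  have hlt : ∀ T ∈ Finset.univ.powersetCard I.card, T ≠ I →
      (∑ i ∈ Finset.univ \ I, v i) < ∑ i ∈ Finset.univ \ T, v i := by
    intro T hT hTI
    have hTcard : T.card = I.card := (Finset.mem_powersetCard_univ).1 hT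
    have hsub : ∑ i ∈ T, v i < ∑ i ∈ I, v i := by
      have hcards : (T \ I).card = (I \ T).card := by
        have h1 := Finset.card_sdiff_add_card_inter T I
        have h2 := Finset.card_sdiff_add_card_inter I T
        rw [Finset.inter_comm] at h2
        omega
      have hTne : (T \ I).Nonempty := by
        rw [Finset.sdiff_nonempty]
        intro hsub
        exact hTI (Finset.eq_of_subset_of_card_le hsub (le_of_eq hTcard.symm))
      have h3 : ∑ i ∈ T \ I, v i < (T \ I).card • δ := by
        rw [← Finset.sum_const]
        refine Finset.sum_lt_sum_of_nonempty hTne fun i hi => ?_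
        have hiI : i ∉ I := (Finset.mem_sdiff.1 hi).2
        exact lt_of_le_of_ne (hvle i) fun h => hiI ((hI i).2 h)
      have h4 : ∑ i ∈ I \ T, v i = (I \ T).card • δ := by
        rw [← Finset.sum_const]
        exact Finset.sum_congr rfl fun i hi => (hI i).1 (Finset.mem_sdiff.1 hi).1
      calc ∑ i ∈ T, v i = ∑ i ∈ T ∩ I, v i + ∑ i ∈ T \ I, v i := by
            rw [Finset.sum_inter_add_sum_sdiff]
        _ < ∑ i ∈ T ∩ I, v i + (I \ T).card • δ := by
            rw [← hcards]; exact add_lt_add_right h3 _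
        _ = ∑ i ∈ I ∩ T, v i + ∑ i ∈ I \ T, v i := by rw [h4, Finset.inter_comm]
        _ = ∑ i ∈ I, v i := by rw [Finset.sum_inter_add_sum_sdiff]
    rw [Finset.sum_sdiff_eq_sub (Finset.subset_univ _),
      Finset.sum_sdiff_eq_sub (Finset.subset_univ _)]
    exact sub_lt_sub_left hsub _
  -- the valuation of the Hasse derivative
  have hHD : μ ((f.map φ).hasseDeriv I.card)
      = ((∑ i ∈ Finset.univ \ I, v i : Γ) : WithTop Γ) := by
    rw [hfact, myHasseDeriv_prod]
    rw [myAddValuation_sum_eq μ (i0 := I) (Finset.mem_powersetCard_univ.2 rfl) ?_ ?_]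
    · exact hval I
    · rw [hval]; exact WithTop.coe_ne_top
    · intro T hT hTI
      rw [hval, hval]
      exact_mod_cast hlt T hT hTI
  have hν1 : ν (f.hasseDeriv I.card) = ((∑ i ∈ Finset.univ \ I, v i : Γ) : WithTop Γ) := by
    rw [← hext, myHasseDeriv_map, hHD]
  have hν2 : ν f = ((∑ i : Fin n, v i : Γ) : WithTop Γ) := by
    rw [← hext f, hfact]
    have := hval ∅
    rwa [Finset.sdiff_empty] at this
  have hcompl : Iᶜ = Finset.univ \ I := by
    rw [Finset.compl_eq_univ_sdiff]
  have part1 : aval ν (f.hasseDeriv I.card) = ∑ i ∈ Iᶜ, v i := by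
    rw [aval, hν1, WithTop.untopD_coe, hcompl]
  refine ⟨part1, ?_⟩
  rw [part1]
  have havf : aval ν f = ∑ i : Fin n, v i := by rw [aval, hν2, WithTop.untopD_coe]
  rw [havf, hcompl, Finset.sum_sdiff_eq_sub (Finset.subset_univ _), sub_sub_cancel]
  rw [← Finset.sum_const]
  exact Finset.sum_congr rfl fun i hi => (hI i).1 hi
end
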